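/- arXiv:0905.0837 — 6 statements merged into one kernel-verified Lean document; each statement's English description precedes it below -/
import Mathlib

section
/- For any complex numbers λ_1, …, λ_n, the Jacobian determinant of the map σ^n = (σ_1, …, σ_n) : ℂ^n → ℂ^n of elementary symmetric polynomials at the point (λ_1, …, λ_n) equals ∏_{i<j} (λ_i − λ_j). -/
open Finset

section Aux

variable {n : ℕ}

/-- Decomposition of subsets of cardinality `r+1` according to membership of `j`. -/
lemma esymm_rec (l : Fin n → ℂ) (j : Fin n) (r : ℕ) :
    ∑ s ∈ (univ : Finset (Fin n)).powersetCard (r + 1), ∏ k ∈ s, l k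
      = (∑ s ∈ (univ.erase j).powersetCard (r + 1), ∏ k ∈ s, l k)
        + l j * ∑ s ∈ (univ.erase j).powersetCard r, ∏ k ∈ s, l k := by
  have h1 : (univ : Finset (Fin n)) = insert j (univ.erase j) := by
    simp [Finset.insert_erase (mem_univ j)]
  conv_lhs => rw [h1]
  rw [Finset.powersetCard_succ_insert (notMem_erase _ _), Finset.sum_union, Finset.sum_image]
  · rw [Finset.mul_sum]
    congr 1
    refine Finset.sum_congr rfl fun t ht => ?_
    have hjt : j ∉ t := fun h =>
      (Finset.notMem_erase j univ) ((Finset.mem_powersetCard.1 ht).1 h)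
    rw [Finset.prod_insert hjt]
  · intro t1 h1 t2 h2 he
    have hj1 : j ∉ t1 := fun h =>
      (Finset.notMem_erase j univ) ((Finset.mem_powersetCard.1 h1).1 h)
    have hj2 : j ∉ t2 := fun h =>
      (Finset.notMem_erase j univ) ((Finset.mem_powersetCard.1 h2).1 h)
    rw [← Finset.erase_insert hj1, ← Finset.erase_insert hj2, he]
  · rw [Finset.disjoint_left]
    intro s hs hs'
    obtain ⟨t, ht, rfl⟩ := Finset.mem_image.1 hs'
    exact (Finset.notMem_erase j univ) ((Finset.mem_powersetCard.1 hs).1 (mem_insert_self _ _))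

lemma fderiv_esymm (l : Fin n → ℂ) (r : ℕ) (j : Fin n) :
    fderiv ℂ (fun x : Fin n → ℂ =>
        ∑ s ∈ Finset.univ.powersetCard (r + 1), ∏ k ∈ s, x k) l (Pi.single j 1)
      = ∑ t ∈ (univ.erase j).powersetCard r, ∏ k ∈ t, l k := by
  have hd : HasFDerivAt
      (fun x : Fin n → ℂ => ∑ s ∈ Finset.univ.powersetCard (r + 1), ∏ k ∈ s, x k)
      (∑ s ∈ Finset.univ.powersetCard (r + 1),
        ∑ k ∈ s, (∏ m ∈ s.erase k, l m) • ContinuousLinearMap.proj k) l :=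
    HasFDerivAt.fun_sum fun s _ => hasFDerivAt_finset_prod (𝕜 := ℂ)
  rw [hd.fderiv]
  simp only [ContinuousLinearMap.coe_sum', Finset.sum_apply, ContinuousLinearMap.smul_apply,
    ContinuousLinearMap.proj_apply, Pi.single_apply, smul_eq_mul, mul_ite, mul_one, mul_zero]
  have huniv : (univ : Finset (Fin n)) = insert j (univ.erase j) := by
    simp [Finset.insert_erase (mem_univ j)]
  conv_lhs => rw [huniv]
  rw [Finset.powersetCard_succ_insert (notMem_erase _ _), Finset.sum_union, Finset.sum_image]
  · have h0 : ∀ s ∈ (univ.erase j).powersetCard (r + 1),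
        (∑ k ∈ s, if k = j then ∏ m ∈ s.erase k, l m else 0) = 0 := by
      intro s hs
      refine Finset.sum_eq_zero fun k hk => ?_
      have : k ≠ j := by
        intro hkj
        subst hkj
        exact (Finset.notMem_erase k univ) ((Finset.mem_powersetCard.1 hs).1 hk)
      simp [this]
    rw [Finset.sum_congr rfl h0, Finset.sum_const_zero, zero_add]
    refine Finset.sum_congr rfl fun t ht => ?_
    have hjt : j ∉ t := fun h =>
      (Finset.notMem_erase j univ) ((Finset.mem_powersetCard.1 ht).1 h)
    rw [Finset.sum_ite_eq' (insert j t) j (fun k => ∏ m ∈ (insert j t).erase k, l m)]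
    simp [Finset.erase_insert hjt]
  · intro t1 h1 t2 h2 he
    have hj1 : j ∉ t1 := fun h =>
      (Finset.notMem_erase j univ) ((Finset.mem_powersetCard.1 h1).1 h)
    have hj2 : j ∉ t2 := fun h =>
      (Finset.notMem_erase j univ) ((Finset.mem_powersetCard.1 h2).1 h)
    rw [← Finset.erase_insert hj1, ← Finset.erase_insert hj2, he]
  · rw [Finset.disjoint_left]
    intro s hs hs'
    obtain ⟨t, ht, rfl⟩ := Finset.mem_image.1 hs'
    exact (Finset.notMem_erase j univ) ((Finset.mem_powersetCard.1 hs).1 (mem_insert_self _ _))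

/-- `e_i` of the variables without `j`, expanded in terms of the full `e`'s. -/
lemma esymm_erase_expand (l : Fin n → ℂ) (j : Fin n) (i : ℕ) :
    ∑ t ∈ ((univ : Finset (Fin n)).erase j).powersetCard i, ∏ k ∈ t, l k
      = ∑ m ∈ Finset.range (i + 1),
          (-1 : ℂ) ^ m * l j ^ m * ∑ s ∈ (univ : Finset (Fin n)).powersetCard (i - m),
            ∏ k ∈ s, l k := by
  induction i with
  | zero => simp
  | succ i ih =>
    have hrec := esymm_rec l j i
    have h1 : ∑ t ∈ ((univ : Finset (Fin n)).erase j).powersetCard (i + 1), ∏ k ∈ t, l k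
        = (∑ s ∈ (univ : Finset (Fin n)).powersetCard (i + 1), ∏ k ∈ s, l k)
          - l j * ∑ t ∈ (univ.erase j).powersetCard i, ∏ k ∈ t, l k := by
      rw [hrec]; ring
    rw [h1, ih, Finset.sum_range_succ' (fun m => (-1 : ℂ) ^ m * l j ^ m *
      ∑ s ∈ (univ : Finset (Fin n)).powersetCard (i + 1 - m), ∏ k ∈ s, l k) (i + 1)]
    simp only [Nat.succ_sub_succ_eq_sub, pow_zero, one_mul, Nat.sub_zero]
    rw [Finset.mul_sum]
    have hc : ∀ x ∈ Finset.range (i + 1), (-1 : ℂ) ^ (x + 1) * l j ^ (x + 1) *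
        ∑ s ∈ (univ : Finset (Fin n)).powersetCard (i - x), ∏ k ∈ s, l k
        = -(l j * ((-1 : ℂ) ^ x * l j ^ x *
            ∑ s ∈ (univ : Finset (Fin n)).powersetCard (i - x), ∏ k ∈ s, l k)) :=
      fun x _ => by ring
    rw [Finset.sum_congr rfl hc, Finset.sum_neg_distrib]
    ring

end Aux

/-- The Jacobian determinant of the elementary symmetric map
`σⁿ = (σ₁, …, σₙ) : ℂⁿ → ℂⁿ` at `(λ₁,…,λₙ)` equals `∏_{i<j} (λᵢ − λⱼ)`. -/
theorem jacobian_esymm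
    (n : ℕ) (l : Fin n → ℂ) :
    (Matrix.of fun i j : Fin n =>
        fderiv ℂ (fun x : Fin n → ℂ =>
          ∑ s ∈ Finset.univ.powersetCard (i.1 + 1), ∏ k ∈ s, x k) l (Pi.single j 1)).det
      = ∏ i : Fin n, ∏ j ∈ Finset.Ioi i, (l i - l j) := by
  set E : ℕ → ℂ := fun r => ∑ s ∈ (univ : Finset (Fin n)).powersetCard r, ∏ k ∈ s, l k with hE
  have hE0 : E 0 = 1 := by simp [hE]
  set T : Matrix (Fin n) (Fin n) ℂ := Matrix.of fun i k : Fin n =>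
    if (k : ℕ) ≤ (i : ℕ) then (-1 : ℂ) ^ (k : ℕ) * E (i.1 - k.1) else 0 with hT
  have hfact : (Matrix.of fun i j : Fin n =>
        fderiv ℂ (fun x : Fin n → ℂ =>
          ∑ s ∈ Finset.univ.powersetCard (i.1 + 1), ∏ k ∈ s, x k) l (Pi.single j 1))
      = T * (Matrix.vandermonde l).transpose := by
    ext i j
    rw [Matrix.mul_apply, Matrix.of_apply, fderiv_esymm l i.1 j, esymm_erase_expand l j i.1]
    have h1 : ∀ k : Fin n, T i k * (Matrix.vandermonde l).transpose k j
        = if (k : ℕ) ≤ (i : ℕ) then (-1 : ℂ) ^ (k : ℕ) * l j ^ (k : ℕ) * E (i.1 - k.1)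
          else 0 := by
      intro k
      rw [hT, Matrix.transpose_apply, Matrix.vandermonde_apply, Matrix.of_apply, ite_mul,
        zero_mul]
      split <;> ring_nf
    rw [Finset.sum_congr rfl fun k _ => h1 k]
    rw [Fin.sum_univ_eq_sum_range
      (fun m => if m ≤ (i : ℕ) then (-1 : ℂ) ^ m * l j ^ m * E (i.1 - m) else 0) n]
    rw [← Finset.sum_subset (Finset.range_subset_range.2 i.isLt)
      (fun m _ hm => if_neg (fun hle => hm (Finset.mem_range.2 (Nat.lt_succ_of_le hle))))]
    exact Finset.sum_congr rfl fun m hm =>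
      (if_pos (Nat.lt_succ_iff.1 (Finset.mem_range.1 hm))).symm
  rw [hfact, Matrix.det_mul, Matrix.det_transpose, Matrix.det_vandermonde]
  have hTtri : T.BlockTriangular OrderDual.toDual := by
    intro i k h
    change i < k at h
    exact if_neg (not_le.2 h)
  rw [Matrix.det_of_lowerTriangular T hTtri]
  have hdiag : ∏ i : Fin n, T i i = ∏ i : Fin n, (-1 : ℂ) ^ (i : ℕ) := by
    refine Finset.prod_congr rfl fun i _ => ?_
    simp [hT, hE0]
  rw [hdiag]
  have hsign : ∀ i : Fin n, ∏ j ∈ Finset.Ioi i, (l i - l j)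
      = (-1 : ℂ) ^ (n - 1 - (i : ℕ)) * ∏ j ∈ Finset.Ioi i, (l j - l i) := by
    intro i
    calc ∏ j ∈ Finset.Ioi i, (l i - l j) = ∏ j ∈ Finset.Ioi i, (-1) * (l j - l i) := by
          refine Finset.prod_congr rfl fun j _ => by ring
      _ = (-1 : ℂ) ^ (Finset.Ioi i).card * ∏ j ∈ Finset.Ioi i, (l j - l i) := by
          rw [Finset.prod_mul_distrib, Finset.prod_const]
      _ = (-1 : ℂ) ^ (n - 1 - (i : ℕ)) * ∏ j ∈ Finset.Ioi i, (l j - l i) := by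
          rw [Fin.card_Ioi]
  calc (∏ i : Fin n, (-1 : ℂ) ^ (i : ℕ)) * ∏ i : Fin n, ∏ j ∈ Finset.Ioi i, (l j - l i)
      = (∏ i : Fin n, (-1 : ℂ) ^ (n - 1 - (i : ℕ)))
        * ∏ i : Fin n, ∏ j ∈ Finset.Ioi i, (l j - l i) := by
        congr 1
        rw [Fin.prod_univ_eq_prod_range (fun m => (-1 : ℂ) ^ m) n,
          Fin.prod_univ_eq_prod_range (fun m => (-1 : ℂ) ^ (n - 1 - m)) n,
          Finset.prod_range_reflect (fun m => (-1 : ℂ) ^ m) n]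
    _ = ∏ i : Fin n, ((-1 : ℂ) ^ (n - 1 - (i : ℕ)) * ∏ j ∈ Finset.Ioi i, (l j - l i)) := by
        rw [Finset.prod_mul_distrib]
    _ = ∏ i : Fin n, ∏ j ∈ Finset.Ioi i, (l i - l j) :=
        Finset.prod_congr rfl fun i _ => (hsign i).symm
end

section
/- For complex numbers λ_1, …, λ_n, the determinant of the k×k leading principal minor B_k of the Bezoutiant matrix B = (s_{i+j−2})_{1≤i,j≤n} (where s_m is the m-th power sum of the λ's, with s_0 = n) equals ∑_{i_1 < i_2 < ⋯ < i_k} ∏_{1 ≤ a < b ≤ k} (λ_{i_a} − λ_{i_b})^2. -/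
open Finset

private theorem fiber_eq' (n k : ℕ) (s : Finset (Fin n)) (hs : s.card = k)
    (F : (Fin k → Fin n) → ℂ) :
    ∑ σ : Equiv.Perm (Fin k), F (fun i => s.orderEmbOfFin hs (σ i))
      = ∑ f ∈ Finset.univ.filter (fun f : Fin k → Fin n =>
        Function.Injective f ∧ Finset.image f Finset.univ = s), F f := by
  have key : ∀ (f : Fin k → Fin n), Function.Injective f → Finset.image f Finset.univ = s →
      ∀ i, f i ∈ s := by
    intro f _ him i; rw [← him]; exact Finset.mem_image_of_mem f (Finset.mem_univ i)
  have hco : ∀ (x : Fin k), ((s.orderIsoOfFin hs x : Fin n)) = s.orderEmbOfFin hs x :=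
    fun x => Finset.coe_orderIsoOfFin_apply s hs x
  refine Finset.sum_bij' (i := fun (σ : Equiv.Perm (Fin k)) (_ : σ ∈ Finset.univ) =>
      fun i => s.orderEmbOfFin hs (σ i))
    (j := fun f hf => Equiv.ofBijective
      (fun i => (s.orderIsoOfFin hs).symm ⟨f i,
        key f (Finset.mem_filter.mp hf).2.1 (Finset.mem_filter.mp hf).2.2 i⟩)
      (Finite.injective_iff_bijective.mp (fun a b hab =>
        (Finset.mem_filter.mp hf).2.1 (by
          simpa using congrArg (fun x => ((s.orderIsoOfFin hs) x : Fin n)) hab))))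
    ?_ ?_ ?_ ?_ ?_
  · intro σ _
    refine Finset.mem_filter.mpr ⟨Finset.mem_univ _, ?_, ?_⟩
    · exact (s.orderEmbOfFin hs).injective.comp σ.injective
    · apply Finset.eq_of_subset_of_card_le
      · intro x hx
        obtain ⟨i, _, rfl⟩ := Finset.mem_image.mp hx
        exact s.orderEmbOfFin_mem hs (σ i)
      · have : k ≤ (Finset.image (fun i => s.orderEmbOfFin hs (σ i)) Finset.univ).card := by
          rw [Finset.card_image_of_injective _
            (fun a b h => σ.injective ((s.orderEmbOfFin hs).injective h)),
            Finset.card_univ, Fintype.card_fin]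
        rw [hs]; exact this
  · intro f hf; exact Finset.mem_univ _
  · intro σ _
    refine Equiv.ext fun i => ?_
    simp only [Equiv.ofBijective_apply]
    rw [OrderIso.symm_apply_eq]
    exact Subtype.ext (hco (σ i)).symm
  · intro f hf
    funext i
    simp only [Equiv.ofBijective_apply]
    rw [← hco, OrderIso.apply_symm_apply]
  · intro σ _
    rfl

/-- The determinant of the `k×k` leading principal minor `B_k = (s_{i+j-2})_{1≤i,j≤k}`
of the Bezoutiant (with `s_m = ∑_a λ_a^m`, so `s_0 = n`) equals
`∑_{i₁<⋯<i_k} ∏_{a<b} (λ_{i_a} − λ_{i_b})²`, the sum being over `k`-element subsets. -/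
theorem det_bezoutiant_minor
    (n k : ℕ) (hk : k ≤ n) (l : Fin n → ℂ) :
    (Matrix.of fun i j : Fin k => ∑ a : Fin n, l a ^ (i.1 + j.1)).det
      = ∑ s ∈ Finset.univ.powersetCard k,
          ∏ p ∈ (s ×ˢ s).filter (fun p : Fin n × Fin n => p.1 < p.2), (l p.1 - l p.2) ^ 2 := by
  classical
  set F : (Fin k → Fin n) → ℂ :=
    fun f => (∏ i, l (f i) ^ i.1) * (Matrix.vandermonde (fun i => l (f i))).det with hF
  -- Step 1: multilinear expansion
  have hexp : (Matrix.of fun i j : Fin k => ∑ a : Fin n, l a ^ (i.1 + j.1)).det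
      = ∑ f : Fin k → Fin n, F f := by
    have h1 : (Matrix.of fun i j : Fin k => ∑ a : Fin n, l a ^ (i.1 + j.1)).det
        = (Matrix.detRowAlternating (R := ℂ) (n := Fin k)).toMultilinearMap
            (fun i : Fin k => ∑ a : Fin n, (l a ^ i.1) • fun j : Fin k => l a ^ j.1) := by
      congr 1
      ext i j
      simp [Matrix.of_apply, pow_add]
    rw [h1, MultilinearMap.map_sum]
    refine Finset.sum_congr rfl fun f _ => ?_
    rw [MultilinearMap.map_smul_univ, smul_eq_mul]
    rfl
  -- Step 2: non-injective terms vanish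
  have hsplit : ∑ f : Fin k → Fin n, F f
      = ∑ f ∈ Finset.univ.filter (fun f : Fin k → Fin n => Function.Injective f), F f := by
    rw [← Finset.sum_filter_add_sum_filter_not Finset.univ
      (fun f : Fin k → Fin n => Function.Injective f) F]
    have : ∑ f ∈ Finset.univ.filter
        (fun f : Fin k → Fin n => ¬ Function.Injective f), F f = 0 := by
      refine Finset.sum_eq_zero fun f hf => ?_
      obtain ⟨a, b, hab, hne⟩ : ∃ a b, f a = f b ∧ a ≠ b := by
        have := (Finset.mem_filter.mp hf).2
        simp only [Function.Injective, not_forall] at this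
        obtain ⟨a, b, h1, h2⟩ := this
        exact ⟨a, b, h1, h2⟩
      have : (Matrix.vandermonde (fun i => l (f i))).det = 0 := by
        apply Matrix.det_zero_of_row_eq hne
        funext j
        simp [Matrix.vandermonde, hab]
      rw [hF]; simp [this]
    rw [this, add_zero]
  -- Step 3: fiberwise over images
  have hfib : ∑ f ∈ Finset.univ.filter (fun f : Fin k → Fin n => Function.Injective f), F f
      = ∑ s ∈ Finset.univ.powersetCard k,
          ∑ f ∈ Finset.univ.filter (fun f : Fin k → Fin n =>
            Function.Injective f ∧ Finset.image f Finset.univ = s), F f := by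
    have hmaps : ∀ f ∈ Finset.univ.filter (fun f : Fin k → Fin n => Function.Injective f),
        Finset.image f Finset.univ ∈ Finset.univ.powersetCard k := by
      intro f hf
      rw [Finset.mem_powersetCard]
      refine ⟨Finset.subset_univ _, ?_⟩
      rw [Finset.card_image_of_injective _ (Finset.mem_filter.mp hf).2,
        Finset.card_univ, Fintype.card_fin]
    rw [← Finset.sum_fiberwise_of_maps_to hmaps F]
    refine Finset.sum_congr rfl fun s _ => ?_
    rw [Finset.filter_filter]
  rw [hexp, hsplit, hfib]
  refine Finset.sum_congr rfl fun s hs => ?_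
  have hcard : s.card = k := (Finset.mem_powersetCard.mp hs).2
  rw [← fiber_eq' n k s hcard F]
  -- Step 4: evaluate the permutation sum
  set e := s.orderEmbOfFin hcard with he
  set D := (Matrix.vandermonde (fun i => l (e i))).det with hD
  have hperm : ∀ σ : Equiv.Perm (Fin k),
      (Matrix.vandermonde (fun i => l (e (σ i)))).det = (Equiv.Perm.sign σ : ℂ) * D := by
    intro σ
    have : Matrix.vandermonde (fun i => l (e (σ i)))
        = (Matrix.vandermonde (fun i => l (e i))).submatrix σ id := by
      ext i j; simp [Matrix.vandermonde]
    rw [this, Matrix.det_permute]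
  have hsum : ∑ σ : Equiv.Perm (Fin k), F (fun i => e (σ i)) = D * D := by
    calc ∑ σ : Equiv.Perm (Fin k), F (fun i => e (σ i))
        = ∑ σ : Equiv.Perm (Fin k),
            (Equiv.Perm.sign σ : ℂ) * (∏ i, l (e (σ i)) ^ i.1) * D := by
          refine Finset.sum_congr rfl fun σ _ => ?_
          rw [hF]
          simp only
          rw [hperm σ]
          ring
      _ = (∑ σ : Equiv.Perm (Fin k), (Equiv.Perm.sign σ : ℂ) * ∏ i, l (e (σ i)) ^ i.1) * D := by
          rw [Finset.sum_mul]
      _ = D * D := by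
          congr 1
          rw [hD, Matrix.det_apply]
          refine Finset.sum_congr rfl fun σ _ => ?_
          simp [Matrix.vandermonde, Units.smul_def, zsmul_eq_mul]
  rw [hsum]
  -- Step 5: identify D * D with the product over pairs
  rw [hD, Matrix.det_vandermonde, ← Finset.prod_mul_distrib]
  have : ∀ i : Fin k, (∏ j ∈ Finset.Ioi i, (l (e j) - l (e i)))
      * (∏ j ∈ Finset.Ioi i, (l (e j) - l (e i)))
      = ∏ j ∈ Finset.Ioi i, (l (e i) - l (e j)) ^ 2 := by
    intro i
    rw [← Finset.prod_mul_distrib]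
    refine Finset.prod_congr rfl fun j _ => ?_
    ring
  rw [Finset.prod_congr rfl fun i _ => this i]
  rw [Finset.prod_sigma' Finset.univ (fun i => Finset.Ioi i)
    (fun i j => (l (e i) - l (e j)) ^ 2)]
  refine Finset.prod_bij' (i := fun p _ => ((e p.1, e p.2) : Fin n × Fin n))
    (j := fun q hq => (⟨(s.orderIsoOfFin hcard).symm ⟨q.1, ?_⟩,
        (s.orderIsoOfFin hcard).symm ⟨q.2, ?_⟩⟩ : Σ _ : Fin k, Fin k))
    ?_ ?_ ?_ ?_ ?_
  · exact (Finset.mem_product.mp (Finset.mem_filter.mp hq).1).1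
  · exact (Finset.mem_product.mp (Finset.mem_filter.mp hq).1).2
  · intro p hp
    have hlt : p.1 < p.2 := Finset.mem_Ioi.mp (Finset.mem_sigma.mp hp).2
    refine Finset.mem_filter.mpr ⟨Finset.mem_product.mpr
      ⟨s.orderEmbOfFin_mem hcard p.1, s.orderEmbOfFin_mem hcard p.2⟩, ?_⟩
    exact (s.orderEmbOfFin hcard).strictMono hlt
  · intro q hq
    refine Finset.mem_sigma.mpr ⟨Finset.mem_univ _, Finset.mem_Ioi.mpr ?_⟩
    have hlt : q.1 < q.2 := (Finset.mem_filter.mp hq).2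
    exact (s.orderIsoOfFin hcard).symm.strictMono (Subtype.mk_lt_mk.mpr hlt)
  · intro p hp
    have hco : ∀ (x : Fin k), ((s.orderIsoOfFin hcard x : Fin n)) = e x :=
      fun x => Finset.coe_orderIsoOfFin_apply s hcard x
    ext <;> simp only <;>
      rw [show (⟨e _, _⟩ : {x // x ∈ s}) = s.orderIsoOfFin hcard _ from Subtype.ext (hco _).symm,
        OrderIso.symm_apply_apply]
  · intro q hq
    have hco : ∀ (x : Fin k), ((s.orderIsoOfFin hcard x : Fin n)) = e x :=
      fun x => Finset.coe_orderIsoOfFin_apply s hcard x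
    ext <;> simp only <;> rw [← hco, OrderIso.apply_symm_apply]
  · intro p hp
    rfl
end

section
/- Conversely, let P(z) = z^n + ∑_{j=1}^n (−1)^j a_j z^{n−j} be a monic polynomial with real coefficients such that the Bezoutiant matrix B̃(P) = (s_{i+j−2})_{1≤i,j≤n} formed from the power sums of the roots of P is positive semidefinite. Then all roots of P are real. -/
open Polynomial

private lemma choose_t {p q b : ℝ} (hb : b ≠ 0) (hpq : ¬ (p = 0 ∧ q = 0)) :
    ∃ t : ℝ, p * (t ^ 2 - b ^ 2) - 2 * t * b * q < 0 := by
  rcases lt_trichotomy p 0 with hp | hp | hp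
  · by_contra h
    push_neg at h
    have h1 := h (2 * b)
    have h2 := h (-(2 * b))
    nlinarith [sq_nonneg b, mul_pos (neg_pos.2 hp) (mul_pos (mul_self_pos.2 hb) (by norm_num : (0:ℝ) < 6))]
  · have hq : q ≠ 0 := by
      intro h; exact hpq ⟨hp, h⟩
    refine ⟨b * q, ?_⟩
    rw [hp]
    nlinarith [mul_pos (mul_self_pos.2 hb) (mul_self_pos.2 hq)]
  · exact ⟨0, by nlinarith [mul_pos hp (mul_self_pos.2 hb)]⟩

private lemma sum_swap_aux {ι : Type*} (S : Multiset ℂ) (t : Finset ι) (f : ι → ℂ → ℂ) :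
    ∑ i ∈ t, (S.map (f i)).sum = (S.map fun w => ∑ i ∈ t, f i w).sum := by
  induction S using Multiset.induction_on with
  | empty => simp
  | cons a s ih => simp [Finset.sum_add_distrib, ih]

/-- Conversely: if the Bezoutiant matrix `B̃(P) = (s_{i+j-2})_{1≤i,j≤n}` formed from the
power sums of the roots of a monic real polynomial `P` of degree `n` is positive
semidefinite, then all roots of `P` are real. -/
theorem hyperbolic_of_bezoutiant_posSemidef
    (n : ℕ) (P : Polynomial ℝ) (hmonic : P.Monic) (hdeg : P.natDegree = n)
    (hpsd : Matrix.PosSemidef (Matrix.of fun i j : Fin n =>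
      (((P.map (algebraMap ℝ ℂ)).roots.map (fun z => z ^ (i.1 + j.1))).sum).re)) :
    ∀ z ∈ (P.map (algebraMap ℝ ℂ)).roots, z.im = 0 := by
  intro z hz
  by_contra him
  set PC : ℂ[X] := P.map (algebraMap ℝ ℂ) with hPCdef
  have hPCmonic : PC.Monic := hmonic.map _
  have hPC0 : PC ≠ 0 := hPCmonic.ne_zero
  set m : ℕ := PC.rootMultiplicity z with hmdef
  have hm1 : 1 ≤ m := (Polynomial.rootMultiplicity_pos hPC0).2 (isRoot_of_mem_roots hz)
  have hzz : (starRingEnd ℂ) z ≠ z := fun h => him (Complex.conj_eq_iff_im.1 h)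
  -- conjugation stability
  have hcomp : (starRingEnd ℂ).comp (algebraMap ℝ ℂ) = algebraMap ℝ ℂ := by
    ext x; simp
  have hconjmap : PC.map (starRingEnd ℂ) = PC := by
    rw [hPCdef, Polynomial.map_map, hcomp]
  have hdvd1 : (X - C z) ^ m ∣ PC := Polynomial.pow_rootMultiplicity_dvd PC z
  have hdvd2 : (X - C ((starRingEnd ℂ) z)) ^ m ∣ PC := by
    have h := Polynomial.map_dvd (starRingEnd ℂ) hdvd1
    simpa [Polynomial.map_pow, hconjmap] using h
  have hcop : IsCoprime ((X - C z) ^ m) ((X - C ((starRingEnd ℂ) z)) ^ m) :=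
    (Polynomial.isCoprime_X_sub_C_of_isUnit_sub
      ((sub_ne_zero.2 hzz.symm).isUnit)).pow
  have hdvdmul : ((X - C z) * (X - C ((starRingEnd ℂ) z))) ^ m ∣ PC := by
    rw [mul_pow]; exact hcop.mul_dvd hdvd1 hdvd2
  -- real quadratic divisor
  set D : ℝ[X] := (X ^ 2 - C (2 * z.re) * X + C (z.re ^ 2 + z.im ^ 2)) ^ m with hDdef
  have hquad : (X ^ 2 - C (2 * z.re) * X + C (z.re ^ 2 + z.im ^ 2) : ℝ[X]).map (algebraMap ℝ ℂ)
      = (X - C z) * (X - C ((starRingEnd ℂ) z)) := by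
    have h1 : ((2 * z.re : ℝ) : ℂ) = z + (starRingEnd ℂ) z := by
      rw [Complex.add_conj]
    have h2 : ((z.re ^ 2 + z.im ^ 2 : ℝ) : ℂ) = z * (starRingEnd ℂ) z := by
      rw [Complex.mul_conj]; simp [Complex.normSq_apply]; ring
    simp only [Polynomial.map_add, Polynomial.map_sub, Polynomial.map_mul, Polynomial.map_pow,
      map_X, map_C, Complex.coe_algebraMap]
    rw [h1, h2]
    simp only [C_add, C_mul]
    ring
  have hDmap : D.map (algebraMap ℝ ℂ) = ((X - C z) * (X - C ((starRingEnd ℂ) z))) ^ m := by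
    rw [hDdef, Polynomial.map_pow, hquad]
  have hquadmonic : (X ^ 2 - C (2 * z.re) * X + C (z.re ^ 2 + z.im ^ 2) : ℝ[X]).Monic := by
    monicity!
  have hDmonic : D.Monic := hquadmonic.pow m
  have hDdvd : D ∣ P := by
    rw [← Polynomial.map_dvd_map (algebraMap ℝ ℂ) (algebraMap ℝ ℂ).injective hDmonic, hDmap]
    exact hdvdmul
  obtain ⟨R, hPR⟩ := hDdvd
  have hR0 : R ≠ 0 := by
    intro h; rw [h, mul_zero] at hPR; exact hmonic.ne_zero hPR
  -- degree bookkeeping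
  have hquaddeg : (X ^ 2 - C (2 * z.re) * X + C (z.re ^ 2 + z.im ^ 2) : ℝ[X]).natDegree = 2 := by
    compute_degree!
  have hDdeg : D.natDegree = 2 * m := by
    rw [hDdef, Polynomial.natDegree_pow, hquaddeg]; ring
  have hdegsum : 2 * m + R.natDegree = n := by
    rw [← hdeg, hPR, Polynomial.natDegree_mul hDmonic.ne_zero hR0, hDdeg]
  -- complex factorization
  set RC : ℂ[X] := R.map (algebraMap ℝ ℂ) with hRCdef
  have hRC0 : RC ≠ 0 := by
    simpa [hRCdef, Polynomial.map_eq_zero_iff (algebraMap ℝ ℂ).injective] using hR0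
  have hPCfact : PC = ((X - C z) * (X - C ((starRingEnd ℂ) z))) ^ m * RC := by
    rw [hPCdef, hPR, Polynomial.map_mul, hDmap]
  have hDC0 : (((X - C z) * (X - C ((starRingEnd ℂ) z))) ^ m : ℂ[X]) ≠ 0 := by
    apply pow_ne_zero
    exact mul_ne_zero (X_sub_C_ne_zero z) (X_sub_C_ne_zero _)
  -- roots decomposition
  have hrootsD : (((X - C z) * (X - C ((starRingEnd ℂ) z))) ^ m : ℂ[X]).roots
      = m • ({z} : Multiset ℂ) + m • {(starRingEnd ℂ) z} := by
    rw [Polynomial.roots_pow, Polynomial.roots_mul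
      (mul_ne_zero (X_sub_C_ne_zero z) (X_sub_C_ne_zero _)),
      Polynomial.roots_X_sub_C, Polynomial.roots_X_sub_C, smul_add]
  have hroots : PC.roots = (m • ({z} : Multiset ℂ) + m • {(starRingEnd ℂ) z}) + RC.roots := by
    rw [hPCfact, Polynomial.roots_mul (by rw [← hPCfact]; exact hPC0), hrootsD]
  -- z is not a root of RC
  have hRCz : RC.eval z ≠ 0 := by
    intro heval
    classical
    have hcount : PC.roots.count z = m := Polynomial.count_roots PC
    have hc1 : (m • ({z} : Multiset ℂ)).count z = m := by
      simp [Multiset.count_nsmul]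
    have hc2 : (m • ({(starRingEnd ℂ) z} : Multiset ℂ)).count z = 0 := by
      simp [Multiset.count_nsmul, Multiset.count_singleton, hzz.symm]
    rw [hroots, Multiset.count_add, Multiset.count_add, hc1, hc2] at hcount
    have hmem : z ∈ RC.roots := by
      rw [Polynomial.mem_roots hRC0]
      exact heval
    have h1c : 1 ≤ RC.roots.count z := Multiset.one_le_count_iff_mem.2 hmem
    omega
  -- choose the shift t
  set u : ℂ := RC.eval z with hudef
  have hu2 : u ^ 2 ≠ 0 := pow_ne_zero 2 hRCz
  have hpq : ¬ ((u ^ 2).re = 0 ∧ (u ^ 2).im = 0) := by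
    intro h
    exact hu2 (Complex.ext h.1 h.2)
  obtain ⟨t, ht⟩ := choose_t him hpq
  set c : ℝ := z.re - t with hcdef
  -- the test polynomial
  set q : ℝ[X] := (X - C c) * R with hqdef
  have hqdeg : q.natDegree < n := by
    rw [hqdef, Polynomial.natDegree_mul (X_sub_C_ne_zero c) hR0, Polynomial.natDegree_X_sub_C]
    omega
  set qC : ℂ[X] := q.map (algebraMap ℝ ℂ) with hqCdef
  have hqCdeg : qC.natDegree < n :=
    lt_of_le_of_lt Polynomial.natDegree_map_le hqdeg
  have hqCfact : qC = (X - C (c : ℂ)) * RC := by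
    rw [hqCdef, hqdef, Polynomial.map_mul, Polynomial.map_sub, map_X, map_C,
      Complex.coe_algebraMap]
  set x : Fin n → ℝ := fun i => q.coeff i.1 with hxdef
  -- evaluation formula
  have heval : ∀ w : ℂ, qC.eval w = ∑ i : Fin n, (x i : ℂ) * w ^ i.1 := by
    intro w
    rw [Polynomial.eval_eq_sum_range' hqCdeg w, ← Fin.sum_univ_eq_sum_range]
    refine Finset.sum_congr rfl fun i _ => ?_
    rw [hqCdef, Polynomial.coeff_map, Complex.coe_algebraMap]
  set S : Multiset ℂ := PC.roots with hSdef
  have key := hpsd.dotProduct_mulVec_nonneg x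
  have expand : dotProduct (star x) (Matrix.mulVec (Matrix.of fun i j : Fin n =>
        ((S.map fun w => w ^ (i.1 + j.1)).sum).re) x)
      = ∑ i : Fin n, ∑ j : Fin n, (x i * x j) * ((S.map fun w => w ^ (i.1 + j.1)).sum).re := by
    simp only [dotProduct, Matrix.mulVec, Matrix.of_apply, Pi.star_apply, star_trivial,
      Finset.mul_sum]
    exact Finset.sum_congr rfl fun i _ => Finset.sum_congr rfl fun j _ => by ring
  have step2 : ∑ i : Fin n, ∑ j : Fin n, (x i * x j) * ((S.map fun w => w ^ (i.1 + j.1)).sum).re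
      = (∑ i : Fin n, ∑ j : Fin n,
          ((x i : ℂ) * (x j : ℂ)) * (S.map fun w => w ^ (i.1 + j.1)).sum).re := by
    rw [Complex.re_sum]
    refine Finset.sum_congr rfl fun i _ => ?_
    rw [Complex.re_sum]
    refine Finset.sum_congr rfl fun j _ => ?_
    rw [← Complex.ofReal_mul, Complex.re_ofReal_mul]
  have step3 : ∑ i : Fin n, ∑ j : Fin n,
        ((x i : ℂ) * (x j : ℂ)) * (S.map fun w => w ^ (i.1 + j.1)).sum
      = (S.map fun w => (qC.eval w) ^ 2).sum := by
    have h1 : ∀ i j : Fin n, ((x i : ℂ) * (x j : ℂ)) * (S.map fun w => w ^ (i.1 + j.1)).sum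
        = (S.map fun w => (x i : ℂ) * w ^ i.1 * ((x j : ℂ) * w ^ j.1)).sum := by
      intro i j
      rw [← Multiset.sum_map_mul_left]
      congr 1
      apply Multiset.map_congr rfl
      intro w _
      rw [pow_add]
      ring
    simp_rw [h1]
    have h2 : ∀ i : Fin n,
        ∑ j : Fin n, (S.map fun w => (x i : ℂ) * w ^ i.1 * ((x j : ℂ) * w ^ j.1)).sum
        = (S.map fun w => ∑ j : Fin n, (x i : ℂ) * w ^ i.1 * ((x j : ℂ) * w ^ j.1)).sum :=
      fun i => sum_swap_aux S Finset.univ _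
    simp_rw [h2]
    rw [sum_swap_aux S Finset.univ _]
    congr 1
    apply Multiset.map_congr rfl
    intro w _
    rw [heval w, sq, Finset.sum_mul_sum]
  -- split the sum over the roots
  set v : ℂ := qC.eval z with hvdef
  have hvz : qC.eval ((starRingEnd ℂ) z) = (starRingEnd ℂ) v := by
    have h := Polynomial.aeval_conj q z
    simpa [hvdef, hqCdef, Polynomial.aeval_def, Polynomial.eval_map] using h
  have hzero : ((RC.roots).map fun w => (qC.eval w) ^ 2).sum = 0 := by
    apply Multiset.sum_eq_zero
    intro a ha
    obtain ⟨w, hw, rfl⟩ := Multiset.mem_map.1 ha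
    have hroot : RC.eval w = 0 := (Polynomial.mem_roots hRC0).1 hw
    rw [hqCfact, Polynomial.eval_mul, hroot, mul_zero, zero_pow two_ne_zero]
  have hsplit : (S.map fun w => (qC.eval w) ^ 2).sum
      = (m : ℂ) * v ^ 2 + (m : ℂ) * ((starRingEnd ℂ) v) ^ 2 := by
    rw [hroots, Multiset.map_add, Multiset.map_add, Multiset.sum_add, Multiset.sum_add,
      hzero, add_zero, Multiset.map_nsmul, Multiset.map_nsmul]
    simp [hvz, ← hvdef, Multiset.nsmul_singleton, Multiset.sum_replicate, nsmul_eq_mul]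
  -- compute the real part
  have hconjsq : ((starRingEnd ℂ) v) ^ 2 = (starRingEnd ℂ) (v ^ 2) := (map_pow _ _ _).symm
  have hre : ((m : ℂ) * v ^ 2 + (m : ℂ) * ((starRingEnd ℂ) v) ^ 2).re
      = (m : ℝ) * (2 * (v ^ 2).re) := by
    simp only [Complex.add_re, Complex.mul_re, Complex.natCast_re, Complex.natCast_im,
      pow_two, Complex.mul_im, Complex.conj_re, Complex.conj_im]
    ring
  -- compute (v^2).re
  have hveq : v = (z - (c : ℂ)) * u := by
    rw [hvdef, hqCfact, Polynomial.eval_mul, hudef]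
    simp
  have hre1 : (z - (c : ℂ)).re = t := by simp [hcdef]
  have him1 : (z - (c : ℂ)).im = z.im := by simp
  have hrev : (v ^ 2).re = (u ^ 2).re * (t ^ 2 - z.im ^ 2) - 2 * t * z.im * (u ^ 2).im := by
    rw [hveq, mul_pow]
    simp only [pow_two, Complex.mul_re, Complex.mul_im, hre1, him1]
    ring
  -- conclude
  have hneg : (v ^ 2).re < 0 := by
    rw [hrev]
    nlinarith [ht]
  have hup : (0 : ℝ) ≤ (m : ℝ) * (2 * (v ^ 2).re) := by
    rw [← hre, ← hsplit, ← step3, ← step2, ← expand]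
    exact key
  have hm1' : (1 : ℝ) ≤ (m : ℝ) := by exact_mod_cast hm1
  nlinarith
end

section
/- Let f_1, f_2, g be real-analytic functions on a connected neighborhood U of 0 ∈ ℝ^q with g nowhere vanishing, and suppose f_1(x)·f_2(x) = x^α g(x) on U for some α ∈ ℕ^q. Then each factor is a normal crossings: there exist β, γ ∈ ℕ^q with β + γ = α and nowhere-vanishing real-analytic functions g_1, g_2 on a possibly smaller neighborhood of 0 such that f_1(x) = x^β g_1(x) and f_2(x) = x^γ g_2(x). -/
open Finset ENNReal NNReal

lemma nc_analytic_mul_eq_zero {q : ℕ} {f g : (Fin q → ℝ) → ℝ} {s : Set (Fin q → ℝ)}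
    (hs : IsOpen s) (hc : IsPreconnected s)
    (hf : AnalyticOnNhd ℝ f s) (hg : AnalyticOnNhd ℝ g s)
    (h : ∀ x ∈ s, f x * g x = 0) :
    (∀ x ∈ s, f x = 0) ∨ (∀ x ∈ s, g x = 0) := by
  have key : ∀ x ∈ s, f =ᶠ[nhds x] 0 ∨ g =ᶠ[nhds x] 0 := by
    intro x hx
    obtain ⟨ε, hε, hball⟩ := Metric.isOpen_iff.1 hs x hx
    by_cases hz : ∃ z ∈ Metric.ball x ε, f z ≠ 0
    · obtain ⟨z, hzb, hfz⟩ := hz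
      right
      have hopen : IsOpen (Metric.ball x ε ∩ f ⁻¹' {(0:ℝ)}ᶜ) :=
        ((hf.mono hball).continuousOn).isOpen_inter_preimage Metric.isOpen_ball
          (isOpen_compl_singleton)
      have hgz : g =ᶠ[nhds z] 0 := by
        filter_upwards [hopen.mem_nhds ⟨hzb, hfz⟩] with w hw
        have := h w (hball hw.1)
        rcases mul_eq_zero.1 this with h1 | h2
        · exact absurd h1 hw.2
        · exact h2
      have hg0 : Set.EqOn g 0 (Metric.ball x ε) :=
        (hg.mono hball).eqOn_zero_of_preconnected_of_eventuallyEq_zero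
          (convex_ball x ε).isPreconnected hzb hgz
      filter_upwards [Metric.ball_mem_nhds x hε] with w hw using hg0 hw
    · left
      push_neg at hz
      filter_upwards [Metric.ball_mem_nhds x hε] with w hw using hz w hw
  by_cases hA : ∃ x ∈ s, f =ᶠ[nhds x] 0
  · obtain ⟨x, hx, hfx⟩ := hA
    exact Or.inl fun y hy =>
      hf.eqOn_zero_of_preconnected_of_eventuallyEq_zero hc hx hfx hy
  · right
    push_neg at hA
    intro x hx
    rcases key x hx with h1 | h2
    · exact absurd h1 (hA x hx)
    · exact h2.eq_of_nhds

lemma nc_div_coord {q : ℕ} (i : Fin q) {f : (Fin q → ℝ) → ℝ} {R : ℝ}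
    (hR : 0 < R)
    (hf : AnalyticOnNhd ℝ f (Metric.ball 0 R))
    (hv : ∀ x ∈ Metric.ball (0 : Fin q → ℝ) R, x i = 0 → f x = 0) :
    ∃ r : ℝ, 0 < r ∧ Metric.ball (0 : Fin q → ℝ) r ⊆ Metric.ball 0 R ∧
      ∃ h : (Fin q → ℝ) → ℝ,
      AnalyticOnNhd ℝ h (Metric.ball 0 r) ∧
      ∀ x ∈ Metric.ball (0 : Fin q → ℝ) r, f x = x i * h x := by
  classical
  obtain ⟨p, hp0⟩ := hf 0 (Metric.mem_ball_self hR)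
  obtain ⟨r0, hpr0⟩ := hp0
  set r : ℝ≥0∞ := min r0 (ENNReal.ofReal R) with hrdef
  have hrpos : 0 < r := lt_min hpr0.r_pos (by simpa using hR)
  have hp : HasFPowerSeriesOnBall f p 0 r := hpr0.mono hrpos (min_le_left _ _)
  have hsub : Metric.eball (0 : Fin q → ℝ) r ⊆ Metric.ball 0 R := by
    intro y hy
    have h1 : y ∈ Metric.eball (0 : Fin q → ℝ) (ENNReal.ofReal R) :=
      EMetric.ball_subset_ball (min_le_right _ _) hy
    rwa [Metric.emetric_ball] at h1
  -- the projection killing coordinate i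
  set π : (Fin q → ℝ) →L[ℝ] (Fin q → ℝ) :=
    ContinuousLinearMap.pi (fun j => if j = i then 0 else ContinuousLinearMap.proj j) with hπdef
  have hπ : ∀ (y : Fin q → ℝ) (j : Fin q), π y j = if j = i then 0 else y j := by
    intro y j
    rw [hπdef, ContinuousLinearMap.pi_apply]
    split <;> simp
  have hπnorm : ∀ y : Fin q → ℝ, ‖π y‖ ≤ ‖y‖ := by
    intro y
    refine (pi_norm_le_iff_of_nonneg (norm_nonneg y)).2 fun j => ?_
    rw [hπ]
    split
    · simp
    · exact norm_le_pi_norm y j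
  have hπi : ∀ y, π y i = 0 := fun y => by rw [hπ]; simp
  set e : (Fin q → ℝ) := Pi.single i 1 with hedef
  have hediag : ∀ y : (Fin q → ℝ), y - π y = y i • e := by
    intro y; funext j
    by_cases hj : j = i
    · subst hj; simp [hπ, hedef]
    · simp [hπ, hj, hedef, Pi.single_apply]
  have henorm : ‖e‖ ≤ 1 := by
    refine (pi_norm_le_iff_of_nonneg zero_le_one).2 fun j => ?_
    rcases eq_or_ne j i with hj | hj <;> simp [hedef, Pi.single_apply, hj]
  -- Step A : diagonal vanishing of p on the hyperplane
  have hdiag : ∀ y ∈ Metric.eball (0 : Fin q → ℝ) r, ∀ n, (p n fun _ => π y) = 0 := by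
    intro y hy n
    set a : ℕ → ℝ := fun m => p m (fun _ => π y) with hadef
    set qs : FormalMultilinearSeries ℝ ℝ ℝ :=
      fun m => ContinuousMultilinearMap.mkPiRing ℝ (Fin m) (a m) with hqsdef
    have hπy : (‖π y‖₊ : ℝ≥0∞) < r := by
      have hy' : (‖y‖₊ : ℝ≥0∞) < r := by rwa [mem_emetric_ball_zero_iff, enorm_eq_nnnorm] at hy
      have hle : ‖π y‖₊ ≤ ‖y‖₊ := by
        have := hπnorm y
        exact_mod_cast this
      exact lt_of_le_of_lt (by exact_mod_cast hle) hy'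
    have hπyrad : (‖π y‖₊ : ℝ≥0∞) < p.radius := hπy.trans_le hp.r_le
    obtain ⟨C, hC, hbound⟩ := p.norm_mul_pow_le_of_lt_radius hπyrad
    have hqs : HasFPowerSeriesOnBall (0 : ℝ → ℝ) qs 0 1 := by
      refine ⟨?_, ?_, ?_⟩
      · refine qs.le_radius_of_bound C fun n => ?_
        have h1 : ‖qs n‖ = ‖a n‖ := by
          rw [hqsdef]; exact ContinuousMultilinearMap.norm_mkPiRing (a n)
        have h2 : ‖a n‖ ≤ ‖p n‖ * ‖π y‖ ^ n := by
          rw [hadef]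
          refine le_trans (ContinuousMultilinearMap.le_opNorm _ _) ?_
          simp [Finset.prod_const]
        have h3 : ‖p n‖ * ‖π y‖ ^ n ≤ C := by
          have := hbound n
          simpa [coe_nnnorm] using this
        simp only [NNReal.coe_one, one_pow, mul_one, h1]
        exact h2.trans h3
      · exact zero_lt_one
      · intro t ht
        have htle : ‖t‖₊ ≤ 1 := by
          rw [mem_emetric_ball_zero_iff, enorm_eq_nnnorm] at ht
          exact_mod_cast ht.le
        have hty : t • π y ∈ Metric.eball (0 : Fin q → ℝ) r := by
          rw [mem_emetric_ball_zero_iff, enorm_eq_nnnorm]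
          refine lt_of_le_of_lt ?_ hπy
          rw [nnnorm_smul]
          exact_mod_cast mul_le_of_le_one_left zero_le htle
        have hsum := hp.hasSum hty
        have hzero : f (0 + t • π y) = 0 := by
          rw [zero_add]
          refine hv _ (hsub hty) ?_
          simp [hπi y]
        rw [hzero] at hsum
        have hterm : (fun n => p n fun _ => t • π y) = fun n => qs n fun _ => t := by
          funext n
          rw [hqsdef]
          simp only [ContinuousMultilinearMap.mkPiRing_apply]
          rw [hadef]
          have := (p n).map_smul_univ (fun _ : Fin n => t) (fun _ : Fin n => π y)
          simpa using this
        rw [hterm] at hsum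
        simpa using hsum
    have happly := hqs.hasFPowerSeriesAt.apply_eq_zero n 1
    rw [hqsdef] at happly
    simpa [ContinuousMultilinearMap.mkPiRing_apply, hadef] using happly
  -- Step B : the quotient power series
  set M : ∀ n : ℕ, Fin (n+1) → ContinuousMultilinearMap ℝ (fun _ : Fin (n+1) => (Fin q → ℝ)) ℝ :=
    fun n k => (p (n+1)).compContinuousLinearMap
      (fun j => if (j : ℕ) < (k : ℕ) then π else ContinuousLinearMap.id ℝ _) with hMdef
  set Qk : ∀ n : ℕ, Fin (n+1) → ContinuousMultilinearMap ℝ (fun _ : Fin n => (Fin q → ℝ)) ℝ :=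
    fun n k => ContinuousMultilinearMap.curryFinFinset ℝ (Fin q → ℝ) ℝ
      (s := {k}) (Finset.card_singleton k)
      (by rw [Finset.card_compl, Finset.card_singleton, Fintype.card_fin]; omega) (M n k)
      (fun _ => e) with hQkdef
  set Q : FormalMultilinearSeries ℝ (Fin q → ℝ) ℝ := fun n => ∑ k : Fin (n+1), Qk n k with hQdef
  -- the telescoping diagonal identity
  have hgen : ∀ (n : ℕ) (y : Fin q → ℝ),
      y i • (Q n fun _ => y) = (p (n+1) fun _ => y) - (p (n+1) fun _ => π y) := by
    intro n y
    set c : ℕ → ℝ := fun k => p (n+1) (fun j => if (j : ℕ) < k then π y else y) with hcdef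
    have hc0 : c 0 = p (n+1) (fun _ => y) := by
      have hfn : (fun j : Fin (n+1) => if (j : ℕ) < 0 then π y else y) = fun _ => y := by
        funext j; simp
      simp only [hcdef, hfn]
    have hcn : c (n+1) = p (n+1) (fun _ => π y) := by
      have hfn : (fun j : Fin (n+1) => if (j : ℕ) < n + 1 then π y else y) =
          fun _ => π y := by
        funext j; simp [j.isLt]
      simp only [hcdef, hfn]
    have hstep : ∀ k : Fin (n+1), c (k : ℕ) - c ((k : ℕ)+1) = y i • (Qk n k fun _ => y) := by
      intro k
      set w : Fin (n+1) → (Fin q → ℝ) := fun j => if (j : ℕ) < (k : ℕ) then π y else y with hwdef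
      have hwk : w k = y := by simp [hwdef]
      have h1 : c (k : ℕ) = (p (n+1)) (Function.update w k y) := by
        have hfn : Function.update w k y = fun j : Fin (n+1) => if (j : ℕ) < (k : ℕ) then π y else y := by
          funext j
          rcases eq_or_ne j k with hj | hj
          · subst hj; simp
          · rw [Function.update_of_ne hj]
        simp only [hcdef, hfn]
      have h2 : c ((k : ℕ)+1) = (p (n+1)) (Function.update w k (π y)) := by
        have hfn : Function.update w k (π y) =
            fun j : Fin (n+1) => if (j : ℕ) < (k : ℕ) + 1 then π y else y := by
          funext j
          rcases eq_or_ne j k with hj | hj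
          · subst hj; simp [Nat.lt_succ_self]
          · rw [Function.update_of_ne hj]
            have hne : (j : ℕ) ≠ (k : ℕ) := fun hc => hj (Fin.ext hc)
            have hiff : ((j : ℕ) < (k : ℕ) + 1) ↔ ((j : ℕ) < (k : ℕ)) := by omega
            simp only [hiff, hwdef]
        simp only [hcdef, hfn]
      have h3 : (Qk n k fun _ => y) = (p (n+1)) (Function.update w k e) := by
        have hfn : Function.update w k e =
            fun j : Fin (n+1) => (if (j : ℕ) < (k : ℕ) then π else ContinuousLinearMap.id ℝ _)
              (({k} : Finset (Fin (n+1))).piecewise (fun _ => e) (fun _ => y) j) := by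
          funext j
          rcases eq_or_ne j k with hj | hj
          · subst hj
            simp [Finset.piecewise]
          · rw [Function.update_of_ne hj]
            simp only [Finset.piecewise, Finset.mem_singleton, hj, if_false]
            by_cases hlt : (j : ℕ) < (k : ℕ)
            · simp only [hwdef]
              rw [if_pos hlt, if_pos hlt]
            · simp only [hwdef]
              rw [if_neg hlt, if_neg hlt]
              simp
        simp only [hQkdef]
        rw [ContinuousMultilinearMap.curryFinFinset_apply_const]
        simp only [hMdef]
        rw [ContinuousMultilinearMap.compContinuousLinearMap_apply, ← hfn]
      rw [h1, h2, h3, ← ContinuousMultilinearMap.map_update_smul]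
      rw [← hediag y]
      exact (ContinuousMultilinearMap.map_update_sub _ _ _ _ _).symm
    calc y i • (Q n fun _ => y)
        = ∑ k : Fin (n+1), y i • (Qk n k fun _ => y) := by
          rw [hQdef]
          dsimp only
          rw [ContinuousMultilinearMap.sum_apply, Finset.smul_sum]
      _ = ∑ k : Fin (n+1), (c (k : ℕ) - c ((k : ℕ)+1)) :=
          Finset.sum_congr rfl fun k _ => (hstep k).symm
      _ = ∑ k ∈ Finset.range (n+1), (c k - c (k+1)) :=
          Fin.sum_univ_eq_sum_range (fun k => c k - c (k+1)) (n+1)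
      _ = c 0 - c (n+1) := Finset.sum_range_sub' c (n+1)
      _ = (p (n+1) fun _ => y) - (p (n+1) fun _ => π y) := by rw [hc0, hcn]
  -- norm bound
  have hπop : ‖π‖ ≤ 1 :=
    ContinuousLinearMap.opNorm_le_bound π zero_le_one (fun y => by simpa using hπnorm y)
  have hQnorm : ∀ n, ‖Q n‖ ≤ (n+1) * ‖p (n+1)‖ := by
    intro n
    rw [hQdef]
    refine le_trans (norm_sum_le _ _) ?_
    have hk : ∀ k : Fin (n+1), ‖Qk n k‖ ≤ ‖p (n+1)‖ := by
      intro k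
      rw [hQkdef]
      dsimp only
      refine le_trans (ContinuousMultilinearMap.le_opNorm _ _) ?_
      rw [LinearIsometryEquiv.norm_map]
      have hM : ‖M n k‖ ≤ ‖p (n+1)‖ := by
        rw [hMdef]
        dsimp only
        refine le_trans (ContinuousMultilinearMap.norm_compContinuousLinearMap_le _ _) ?_
        refine mul_le_of_le_one_right (norm_nonneg _) ?_
        refine Finset.prod_le_one (fun j _ => norm_nonneg _) (fun j _ => ?_)
        split
        · exact hπop
        · exact ContinuousLinearMap.norm_id_le
      have hprod : (∏ _j : Fin 1, ‖e‖) ≤ 1 := by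
        simpa using henorm
      calc ‖M n k‖ * ∏ _j : Fin 1, ‖e‖ ≤ ‖p (n+1)‖ * 1 := by
            refine mul_le_mul hM hprod (Finset.prod_nonneg fun _ _ => norm_nonneg _)
              (norm_nonneg _)
        _ = ‖p (n+1)‖ := mul_one _
    calc (∑ k : Fin (n+1), ‖Qk n k‖) ≤ ∑ _k : Fin (n+1), ‖p (n+1)‖ :=
          Finset.sum_le_sum fun k _ => hk k
      _ = (n+1) * ‖p (n+1)‖ := by
          rw [Finset.sum_const, Finset.card_univ, Fintype.card_fin, nsmul_eq_mul]
          push_cast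
          ring
  -- radius of Q is positive
  obtain ⟨t, ht0, htr⟩ : ∃ t : ℝ≥0, 0 < t ∧ (t : ℝ≥0∞) < r := by
    obtain ⟨t, h1, h2⟩ := ENNReal.lt_iff_exists_nnreal_btwn.1 hrpos
    exact ⟨t, by exact_mod_cast h1, h2⟩
  have htrad : (t : ℝ≥0∞) < p.radius := htr.trans_le hp.r_le
  obtain ⟨C, hC, hbound⟩ := p.norm_mul_pow_le_of_lt_radius htrad
  have htR : (0 : ℝ) < t := ht0
  set t' : ℝ≥0 := t / 2 with ht'def
  have ht'0 : 0 < t' := by positivity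
  have hQrad : (t' : ℝ≥0∞) ≤ Q.radius := by
    refine Q.le_radius_of_bound (2 * C / t) fun n => ?_
    have e1 : ((t' : ℝ≥0) : ℝ) = (t : ℝ) / 2 := by
      rw [ht'def]; push_cast; ring
    have hp1 : ‖p (n+1)‖ * (t : ℝ) ^ (n+1) ≤ C := hbound (n+1)
    have h2n : ((n : ℝ) + 1) ≤ 2 ^ (n+1) := by
      have := Nat.lt_two_pow_self (n := n+1)
      exact_mod_cast this.le
    have hpn : (0 : ℝ) ≤ ‖p (n+1)‖ := norm_nonneg _
    calc ‖Q n‖ * (t' : ℝ) ^ n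
        ≤ ((n : ℝ)+1) * ‖p (n+1)‖ * (t' : ℝ) ^ n := by
          refine mul_le_mul_of_nonneg_right ?_ (by positivity)
          exact_mod_cast hQnorm n
      _ = (((n : ℝ)+1) / 2 ^ n) * (‖p (n+1)‖ * (t : ℝ) ^ (n+1)) / (t : ℝ) := by
          rw [e1, div_pow]
          field_simp
          ring
      _ ≤ (((n : ℝ)+1) / 2 ^ n) * C / (t : ℝ) := by
          have hnn : (0 : ℝ) ≤ ((n : ℝ)+1) / 2 ^ n := by positivity
          gcongr
      _ ≤ 2 * C / (t : ℝ) := by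
          have : ((n : ℝ)+1) / 2 ^ n ≤ 2 := by
            rw [div_le_iff₀ (by positivity)]
            calc ((n : ℝ)+1) ≤ 2 ^ (n+1) := h2n
              _ = 2 * 2 ^ n := by ring
          gcongr
  have hQrad0 : (0 : ℝ≥0∞) < Q.radius :=
    lt_of_lt_of_le (by exact_mod_cast ht'0) hQrad
  have hQball := Q.hasFPowerSeriesOnBall hQrad0
  -- final radius
  obtain ⟨s, hs0, hsr⟩ : ∃ s : ℝ≥0, 0 < s ∧ (s : ℝ≥0∞) < min r (t' : ℝ≥0∞) := by
    obtain ⟨s, h1, h2⟩ := ENNReal.lt_iff_exists_nnreal_btwn.1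
      (lt_min hrpos (by exact_mod_cast ht'0 : (0:ℝ≥0∞) < (t' : ℝ≥0∞)))
    exact ⟨s, by exact_mod_cast h1, h2⟩
  have hsball : Metric.ball (0 : Fin q → ℝ) s ⊆ Metric.eball 0 (min r (t' : ℝ≥0∞)) := by
    rw [← Metric.emetric_ball_nnreal]
    exact EMetric.ball_subset_ball hsr.le
  have hsr' : Metric.ball (0 : Fin q → ℝ) s ⊆ Metric.eball 0 r :=
    hsball.trans (EMetric.ball_subset_ball (min_le_left _ _))
  have hsQ : Metric.ball (0 : Fin q → ℝ) s ⊆ Metric.eball 0 Q.radius :=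
    hsball.trans ((EMetric.ball_subset_ball (min_le_right _ _)).trans
      (EMetric.ball_subset_ball hQrad))
  refine ⟨s, hs0, (hsr'.trans hsub), Q.sum, (hQball.analyticOnNhd).mono hsQ, ?_⟩
  intro y hy
  have hyr : y ∈ Metric.eball (0 : Fin q → ℝ) r := hsr' hy
  have hyQ : y ∈ Metric.eball (0 : Fin q → ℝ) Q.radius := hsQ hy
  have S1 := hp.hasSum hyr
  rw [zero_add] at S1
  have S2 := Q.hasSum hyQ
  have S3 := S2.mul_left (y i)
  have hterm : ∀ n, y i * (Q n fun _ => y) = p (n+1) (fun _ => y) := by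
    intro n
    have hg := hgen n y
    rw [hdiag y hyr (n+1), sub_zero] at hg
    rw [← hg, smul_eq_mul]
  simp only [hterm] at S3
  have S5 := (hasSum_nat_add_iff (f := fun n => p n fun _ => y) 1).1 S3
  have h0 : (p 0 fun _ => y) = 0 := by
    have h00 := hp.coeff_zero (fun _ => y)
    rw [h00]
    exact hv 0 (Metric.mem_ball_self hR) rfl
  have huniq := HasSum.unique S1 S5
  rw [Finset.sum_range_one, h0, add_zero] at huniq
  exact huniq

def NCConcl (q : ℕ) (f₁ f₂ : (Fin q → ℝ) → ℝ) (α : Fin q → ℕ) (R : ℝ) : Prop :=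
  ∃ β γ : Fin q → ℕ, (∀ i, β i + γ i = α i) ∧
    ∃ r : ℝ, 0 < r ∧ Metric.ball (0 : Fin q → ℝ) r ⊆ Metric.ball 0 R ∧
    ∃ g₁ g₂ : (Fin q → ℝ) → ℝ,
      AnalyticOnNhd ℝ g₁ (Metric.ball 0 r) ∧ AnalyticOnNhd ℝ g₂ (Metric.ball 0 r) ∧
      (∀ x ∈ Metric.ball (0 : Fin q → ℝ) r, g₁ x ≠ 0) ∧
      (∀ x ∈ Metric.ball (0 : Fin q → ℝ) r, g₂ x ≠ 0) ∧
      (∀ x ∈ Metric.ball (0 : Fin q → ℝ) r, f₁ x = (∏ i, x i ^ β i) * g₁ x) ∧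
      (∀ x ∈ Metric.ball (0 : Fin q → ℝ) r, f₂ x = (∏ i, x i ^ γ i) * g₂ x)

def NCStat (q N : ℕ) : Prop :=
  ∀ (α : Fin q → ℕ), (∑ i, α i) = N →
  ∀ (f₁ f₂ g : (Fin q → ℝ) → ℝ) (R : ℝ), 0 < R →
  AnalyticOnNhd ℝ f₁ (Metric.ball 0 R) → AnalyticOnNhd ℝ f₂ (Metric.ball 0 R) →
  AnalyticOnNhd ℝ g (Metric.ball 0 R) →
  (∀ x ∈ Metric.ball (0 : Fin q → ℝ) R, g x ≠ 0) →
  (∀ x ∈ Metric.ball (0 : Fin q → ℝ) R, f₁ x * f₂ x = (∏ i, x i ^ α i) * g x) →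
  NCConcl q f₁ f₂ α R

lemma NCConcl.swap {q : ℕ} {f₁ f₂ : (Fin q → ℝ) → ℝ} {α : Fin q → ℕ} {R : ℝ}
    (h : NCConcl q f₁ f₂ α R) : NCConcl q f₂ f₁ α R := by
  obtain ⟨β, γ, hβγ, r, hr, hsub, g₁, g₂, a1, a2, n1, n2, e1, e2⟩ := h
  exact ⟨γ, β, fun i => by rw [add_comm]; exact hβγ i, r, hr, hsub, g₂, g₁,
    a2, a1, n2, n1, e2, e1⟩

lemma nc_prod_update {q : ℕ} (x : Fin q → ℝ) (δ : Fin q → ℕ) (i : Fin q) :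
    ∏ j, x j ^ (Function.update δ i (δ i + 1) j) = x i * ∏ j, x j ^ δ j := by
  have h1 : ∏ j, x j ^ (Function.update δ i (δ i + 1) j)
      = x i ^ (δ i + 1) * ∏ j ∈ Finset.univ.erase i, x j ^ δ j := by
    rw [← Finset.mul_prod_erase Finset.univ _ (Finset.mem_univ i)]
    congr 1
    · rw [Function.update_self]
    · refine Finset.prod_congr rfl fun j hj => ?_
      rw [Function.update_of_ne (Finset.ne_of_mem_erase hj)]
  have h2 : ∏ j, x j ^ δ j = x i ^ δ i * ∏ j ∈ Finset.univ.erase i, x j ^ δ j :=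
    (Finset.mul_prod_erase Finset.univ _ (Finset.mem_univ i)).symm
  rw [h1, h2]
  ring

lemma nc_step {q N : ℕ} (ih : NCStat q N) (α : Fin q → ℕ) (hα : ∑ j, α j = N + 1)
    (i : Fin q) (hi : α i ≠ 0)
    (f₁ f₂ g : (Fin q → ℝ) → ℝ) (R : ℝ) (hR : 0 < R)
    (hf₁ : AnalyticOnNhd ℝ f₁ (Metric.ball 0 R)) (hf₂ : AnalyticOnNhd ℝ f₂ (Metric.ball 0 R))
    (hg : AnalyticOnNhd ℝ g (Metric.ball 0 R))
    (hg0 : ∀ x ∈ Metric.ball (0 : Fin q → ℝ) R, g x ≠ 0)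
    (heq : ∀ x ∈ Metric.ball (0 : Fin q → ℝ) R, f₁ x * f₂ x = (∏ i, x i ^ α i) * g x)
    (hslice : ∀ x ∈ Metric.ball (0 : Fin q → ℝ) R, x i = 0 → f₁ x = 0) :
    NCConcl q f₁ f₂ α R := by
  classical
  obtain ⟨r₁, hr₁0, hr₁sub, h, hh, hdiv⟩ := nc_div_coord i hR hf₁ hslice
  set α' : Fin q → ℕ := Function.update α i (α i - 1) with hα'def
  have hαfix : Function.update α' i (α' i + 1) = α := by
    funext j
    rcases eq_or_ne j i with hj | hj
    · subst hj; simp [hα'def]; omega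
    · rw [Function.update_of_ne hj, hα'def, Function.update_of_ne hj]
  have hαrec : ∀ x : Fin q → ℝ, ∏ j, x j ^ α j = x i * ∏ j, x j ^ α' j := by
    intro x
    rw [← hαfix, nc_prod_update]
  have hα'sum : ∑ j, α' j = N := by
    have h1 : ∑ j, α j = α i + ∑ j ∈ Finset.univ.erase i, α j :=
      (Finset.add_sum_erase Finset.univ α (Finset.mem_univ i)).symm
    have h2 : ∑ j, α' j = α' i + ∑ j ∈ Finset.univ.erase i, α' j :=
      (Finset.add_sum_erase Finset.univ α' (Finset.mem_univ i)).symm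
    have h3 : ∑ j ∈ Finset.univ.erase i, α' j = ∑ j ∈ Finset.univ.erase i, α j :=
      Finset.sum_congr rfl fun j hj => by
        rw [hα'def, Function.update_of_ne (Finset.ne_of_mem_erase hj)]
    have h4 : α' i = α i - 1 := by rw [hα'def, Function.update_self]
    omega
  -- the key pointwise identity away from the hyperplane
  have hpt : ∀ z ∈ Metric.ball (0 : Fin q → ℝ) r₁, z i ≠ 0 →
      h z * f₂ z = (∏ j, z j ^ α' j) * g z := by
    intro z hz hzi
    have hzR : z ∈ Metric.ball (0 : Fin q → ℝ) R := hr₁sub hz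
    have e1 : f₁ z * f₂ z = (∏ j, z j ^ α j) * g z := heq z hzR
    rw [hdiv z hz, hαrec z] at e1
    have e2 : z i * (h z * f₂ z) = z i * ((∏ j, z j ^ α' j) * g z) := by
      rw [← mul_assoc, ← mul_assoc]
      exact e1
    exact mul_left_cancel₀ hzi e2
  -- extend by continuity across the hyperplane
  have heq' : ∀ x ∈ Metric.ball (0 : Fin q → ℝ) r₁,
      h x * f₂ x = (∏ j, x j ^ α' j) * g x := by
    intro x hx
    by_cases hxi : x i = 0
    swap
    · exact hpt x hx hxi
    · set ei : Fin q → ℝ := Pi.single i 1 with heidef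
      set ψ : ℝ → (Fin q → ℝ) := fun t => x + t • ei with hψdef
      have hψc : Continuous ψ := by
        rw [hψdef]; exact continuous_const.add (continuous_id.smul continuous_const)
      have hψ0 : ψ 0 = x := by rw [hψdef]; simp
      have hψi : ∀ t, ψ t i = t := by
        intro t
        rw [hψdef]
        simp only [Pi.add_apply, Pi.smul_apply, heidef, Pi.single_eq_same, smul_eq_mul,
          mul_one, hxi, zero_add]
      have hψmem : ∀ t : ℝ, |t| < r₁ - ‖x‖ → ψ t ∈ Metric.ball (0 : Fin q → ℝ) r₁ := by
        intro t ht
        rw [mem_ball_zero_iff]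
        have h1 : ‖ψ t‖ ≤ ‖x‖ + ‖t • ei‖ := by
          rw [hψdef]
          exact norm_add_le _ _
        have h2 : ‖t • ei‖ ≤ |t| := by
          rw [norm_smul, Real.norm_eq_abs]
          have hei : ‖ei‖ ≤ 1 := by
            refine (pi_norm_le_iff_of_nonneg zero_le_one).2 fun j => ?_
            rcases eq_or_ne j i with hj | hj <;> simp [heidef, Pi.single_apply, hj]
          exact mul_le_of_le_one_right (abs_nonneg t) hei
        linarith
      have hxr : ‖x‖ < r₁ := mem_ball_zero_iff.1 hx
      set φ : ℝ → ℝ := fun t => h (ψ t) * f₂ (ψ t) - (∏ j, (ψ t) j ^ α' j) * g (ψ t)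
        with hφdef
      have hφcont : ContinuousAt φ 0 := by
        have hhx : ContinuousAt h x := (hh x hx).continuousAt
        have hf₂x : ContinuousAt f₂ x := (hf₂ x (hr₁sub hx)).continuousAt
        have hgx : ContinuousAt g x := (hg x (hr₁sub hx)).continuousAt
        have hψca : ContinuousAt ψ 0 := hψc.continuousAt
        have c1 : ContinuousAt (fun t => h (ψ t)) 0 := by
          refine ContinuousAt.comp ?_ hψca
          rw [hψ0]; exact hhx
        have c2 : ContinuousAt (fun t => f₂ (ψ t)) 0 := by
          refine ContinuousAt.comp ?_ hψca
          rw [hψ0]; exact hf₂x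
        have c3 : ContinuousAt (fun t => g (ψ t)) 0 := by
          refine ContinuousAt.comp ?_ hψca
          rw [hψ0]; exact hgx
        have c4 : ContinuousAt (fun t => ∏ j, (ψ t) j ^ α' j) 0 := by
          refine Continuous.continuousAt ?_
          refine continuous_finset_prod _ fun j _ => ?_
          exact ((continuous_apply j).comp hψc).pow _
        rw [hφdef]
        exact (c1.mul c2).sub (c4.mul c3)
      have hev : ∀ᶠ t in nhdsWithin (0:ℝ) {(0:ℝ)}ᶜ, φ t = 0 := by
        have hball : {t : ℝ | |t| < r₁ - ‖x‖} ∈ nhds (0:ℝ) := by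
          have : (0:ℝ) ∈ {t : ℝ | |t| < r₁ - ‖x‖} := by simp; linarith
          refine IsOpen.mem_nhds ?_ this
          have : {t : ℝ | |t| < r₁ - ‖x‖} = Metric.ball (0:ℝ) (r₁ - ‖x‖) := by
            ext t; simp [Real.dist_eq]
          rw [this]; exact Metric.isOpen_ball
        filter_upwards [nhdsWithin_le_nhds hball, self_mem_nhdsWithin] with t ht ht0
        have hmem := hψmem t ht
        have hne : ψ t i ≠ 0 := by rw [hψi]; exact ht0
        have := hpt (ψ t) hmem hne
        rw [hφdef]
        simp only [this, sub_self]
      have hlim1 : Filter.Tendsto φ (nhdsWithin (0:ℝ) {(0:ℝ)}ᶜ) (nhds (φ 0)) :=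
        hφcont.continuousWithinAt.tendsto
      have hlim2 : Filter.Tendsto φ (nhdsWithin (0:ℝ) {(0:ℝ)}ᶜ) (nhds 0) := by
        refine Filter.Tendsto.congr' (Filter.EventuallyEq.symm hev) tendsto_const_nhds
      have hφ0 : φ 0 = 0 := tendsto_nhds_unique hlim1 hlim2
      rw [hφdef] at hφ0
      simp only [hψ0] at hφ0
      linarith [hφ0]
  -- apply the induction hypothesis
  have hcon := ih α' hα'sum h f₂ g r₁ hr₁0 hh (hf₂.mono hr₁sub) (hg.mono hr₁sub)
    (fun x hx => hg0 x (hr₁sub hx)) heq'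
  obtain ⟨β', γ, hβγ', r₂, hr₂0, hr₂sub, g₁, g₂, a1, a2, n1, n2, e1, e2⟩ := hcon
  refine ⟨Function.update β' i (β' i + 1), γ, ?_, r₂, hr₂0, hr₂sub.trans hr₁sub, g₁, g₂,
    a1, a2, n1, n2, ?_, e2⟩
  · intro j
    rcases eq_or_ne j i with hj | hj
    · subst hj
      have := hβγ' j
      have h4 : α' j = α j - 1 := by rw [hα'def, Function.update_self]
      rw [Function.update_self]
      omega
    · rw [Function.update_of_ne hj]
      have := hβγ' j
      have h4 : α' j = α j := by rw [hα'def, Function.update_of_ne hj]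
      omega
  · intro x hx
    rw [nc_prod_update x β' i, hdiv x (hr₂sub hx), e1 x hx]
    ring

lemma nc_key {q : ℕ} : ∀ N : ℕ, NCStat q N := by
  intro N
  induction N with
  | zero =>
    intro α hα f₁ f₂ g R hR hf₁ hf₂ hg hg0 heq
    have hα0 : ∀ i, α i = 0 := by
      intro i
      have := Finset.sum_eq_zero_iff.1 hα i (Finset.mem_univ i)
      exact this
    have hprod1 : ∀ x : Fin q → ℝ, (∏ i, x i ^ α i) = 1 := by
      intro x
      refine Finset.prod_eq_one fun i _ => by rw [hα0 i, pow_zero]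
    have heq1 : ∀ x ∈ Metric.ball (0 : Fin q → ℝ) R, f₁ x * f₂ x = g x := by
      intro x hx
      have := heq x hx
      rwa [hprod1 x, one_mul] at this
    refine ⟨0, 0, fun i => by simp [hα0 i], R, hR, subset_rfl, f₁, f₂, hf₁, hf₂, ?_, ?_, ?_, ?_⟩
    · intro x hx h0
      exact hg0 x hx (by rw [← heq1 x hx, h0, zero_mul])
    · intro x hx h0
      exact hg0 x hx (by rw [← heq1 x hx, h0, mul_zero])
    · intro x hx
      simp
    · intro x hx
      simp
  | succ N ih =>
    intro α hα f₁ f₂ g R hR hf₁ hf₂ hg hg0 heq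
    obtain ⟨i, hi⟩ : ∃ i, α i ≠ 0 := by
      by_contra hc
      push_neg at hc
      rw [Finset.sum_eq_zero (fun i _ => hc i)] at hα
      exact Nat.succ_ne_zero N hα.symm
    classical
    -- the slice projection
    set σ : (Fin q → ℝ) →L[ℝ] (Fin q → ℝ) :=
      ContinuousLinearMap.pi (fun j => if j = i then 0 else ContinuousLinearMap.proj j)
      with hσdef
    have hσ : ∀ (y : Fin q → ℝ) (j : Fin q), σ y j = if j = i then 0 else y j := by
      intro y j
      rw [hσdef, ContinuousLinearMap.pi_apply]
      split <;> simp
    have hσnorm : ∀ y : Fin q → ℝ, ‖σ y‖ ≤ ‖y‖ := by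
      intro y
      refine (pi_norm_le_iff_of_nonneg (norm_nonneg y)).2 fun j => ?_
      rw [hσ]
      split
      · simp
      · exact norm_le_pi_norm y j
    set s : Set (Fin q → ℝ) := σ ⁻¹' (Metric.ball 0 R) with hsdef
    have hsopen : IsOpen s := Metric.isOpen_ball.preimage σ.continuous
    have hsconv : Convex ℝ s := by
      have := (convex_ball (0 : Fin q → ℝ) R).linear_preimage (σ : (Fin q → ℝ) →ₗ[ℝ] (Fin q → ℝ))
      exact this
    have hmaps : Set.MapsTo σ s (Metric.ball 0 R) := fun x hx => hx
    have hsub2 : Metric.ball (0 : Fin q → ℝ) R ⊆ s := by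
      intro x hx
      have : ‖σ x‖ < R := lt_of_le_of_lt (hσnorm x) (mem_ball_zero_iff.1 hx)
      exact mem_ball_zero_iff.2 this
    have hzero : ∀ x ∈ s, (f₁ ∘ σ) x * (f₂ ∘ σ) x = 0 := by
      intro x hx
      have hσx : σ x ∈ Metric.ball (0 : Fin q → ℝ) R := hx
      have hσxi : σ x i = 0 := by rw [hσ]; simp
      have hp0 : (∏ j, (σ x) j ^ α j) = 0 :=
        Finset.prod_eq_zero (Finset.mem_univ i) (by rw [hσxi]; exact zero_pow hi)
      have := heq (σ x) hσx
      rw [hp0, zero_mul] at this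
      exact this
    have hσan : AnalyticOnNhd ℝ (⇑σ) s := fun x _ => σ.analyticAt x
    have han1 : AnalyticOnNhd ℝ (f₁ ∘ σ) s := hf₁.comp hσan hmaps
    have han2 : AnalyticOnNhd ℝ (f₂ ∘ σ) s := hf₂.comp hσan hmaps
    have hfix : ∀ x : Fin q → ℝ, x i = 0 → σ x = x := by
      intro x hxi
      funext j
      rw [hσ]
      split
      · rename_i hj; rw [hj, hxi]
      · rfl
    rcases nc_analytic_mul_eq_zero hsopen hsconv.isPreconnected han1 han2 hzero with hc | hc
    · refine nc_step ih α hα i hi f₁ f₂ g R hR hf₁ hf₂ hg hg0 heq ?_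
      intro x hx hxi
      have := hc x (hsub2 hx)
      rwa [Function.comp_apply, hfix x hxi] at this
    · have heq2 : ∀ x ∈ Metric.ball (0 : Fin q → ℝ) R,
          f₂ x * f₁ x = (∏ i, x i ^ α i) * g x := by
        intro x hx
        rw [mul_comm]
        exact heq x hx
      refine NCConcl.swap (nc_step ih α hα i hi f₂ f₁ g R hR hf₂ hf₁ hg hg0 heq2 ?_)
      intro x hx hxi
      have := hc x (hsub2 hx)
      rwa [Function.comp_apply, hfix x hxi] at this

/-- If a product of two real-analytic functions on a connected neighborhood of `0 ∈ ℝ^q`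
is a normal crossings `x^α g(x)` (with `g` nowhere vanishing), then each factor is a
normal crossings: `f₁ = x^β g₁`, `f₂ = x^γ g₂` with `β + γ = α` and `g₁, g₂` nonvanishing
analytic on a possibly smaller neighborhood of `0`. -/
theorem normal_crossings_factors
    (q : ℕ) (U : Set (Fin q → ℝ)) (hUopen : IsOpen U) (hU0 : (0 : Fin q → ℝ) ∈ U)
    (hUconn : IsConnected U)
    (f₁ f₂ g : (Fin q → ℝ) → ℝ) (α : Fin q → ℕ)
    (hf₁ : AnalyticOnNhd ℝ f₁ U) (hf₂ : AnalyticOnNhd ℝ f₂ U) (hg : AnalyticOnNhd ℝ g U)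
    (hg0 : ∀ x ∈ U, g x ≠ 0)
    (heq : ∀ x ∈ U, f₁ x * f₂ x = (∏ i, x i ^ α i) * g x) :
    ∃ β γ : Fin q → ℕ, (∀ i, β i + γ i = α i) ∧
      ∃ V : Set (Fin q → ℝ), IsOpen V ∧ (0 : Fin q → ℝ) ∈ V ∧ V ⊆ U ∧
        ∃ g₁ g₂ : (Fin q → ℝ) → ℝ,
          AnalyticOnNhd ℝ g₁ V ∧ AnalyticOnNhd ℝ g₂ V ∧
          (∀ x ∈ V, g₁ x ≠ 0) ∧ (∀ x ∈ V, g₂ x ≠ 0) ∧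
          (∀ x ∈ V, f₁ x = (∏ i, x i ^ β i) * g₁ x) ∧
          (∀ x ∈ V, f₂ x = (∏ i, x i ^ γ i) * g₂ x) := by
  obtain ⟨R, hR, hRU⟩ := Metric.isOpen_iff.1 hUopen 0 hU0
  obtain ⟨β, γ, hβγ, r, hr, hrsub, g₁, g₂, hg₁, hg₂, hg₁0, hg₂0, hF₁, hF₂⟩ :=
    nc_key (∑ i, α i) α rfl f₁ f₂ g R hR (hf₁.mono hRU) (hf₂.mono hRU) (hg.mono hRU)
      (fun x hx => hg0 x (hRU hx)) (fun x hx => heq x (hRU hx))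
  exact ⟨β, γ, hβγ, Metric.ball 0 r, Metric.isOpen_ball, Metric.mem_ball_self hr,
    (hrsub.trans hRU), g₁, g₂, hg₁, hg₂, hg₁0, hg₂0, hF₁, hF₂⟩
end

section
/- Let f : Ω_ε(ρ) → ℝ be C¹ with ∂_i f ∈ L¹(Ω_ε(ρ)) for a fixed i. Then the i-th partial derivative of f ∘ ψ̄_{γ,ε}⁻¹ belongs to L¹(Ω_ε(ρ^γ)); indeed ∫_{Ω_ε(ρ^γ)} |∂_i (f ∘ ψ̄_{γ,ε}⁻¹)| ≤ (∏_{j≠i} γ_j ρ_j^{γ_j−1}) · ∫_{Ω_ε(ρ)} |∂_i f|. -/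
open Finset MeasureTheory

/-- The open orthant box `Ω_ε(ρ) = {x : 0 < (−1)^{ε_j} x_j < ρ_j ∀j}`. -/
def OmegaBox (q : ℕ) (ε : Fin q → ℕ) (ρ : Fin q → ℝ) : Set (Fin q → ℝ) :=
  {x | ∀ j, 0 < (-1 : ℝ) ^ ε j * x j ∧ (-1 : ℝ) ^ ε j * x j < ρ j}

/-- The inverse power substitution `ψ̄_{γ,ε}⁻¹(x) = ((−1)^{ε_j} |x_j|^{1/γ_j})_j`. -/
noncomputable def psiInv (q : ℕ) (γ ε : Fin q → ℕ) (x : Fin q → ℝ) : Fin q → ℝ :=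
  fun j => (-1 : ℝ) ^ ε j * |x j| ^ ((γ j : ℝ)⁻¹)

lemma det_pi_smul_proj {q : ℕ} (d : Fin q → ℝ) :
    (ContinuousLinearMap.pi fun j => d j • ContinuousLinearMap.proj (R := ℝ)
        (φ := fun _ : Fin q => ℝ) j).det = ∏ j, d j := by
  rw [ContinuousLinearMap.det]
  rw [← LinearMap.det_toMatrix']
  have : (LinearMap.toMatrix' ((ContinuousLinearMap.pi fun j => d j • ContinuousLinearMap.proj
      (R := ℝ) (φ := fun _ : Fin q => ℝ) j) : (Fin q → ℝ) →ₗ[ℝ] (Fin q → ℝ)))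
      = Matrix.diagonal d := by
    ext i j
    simp [LinearMap.toMatrix'_apply, Matrix.diagonal, Pi.single_apply, eq_comm]
  rw [this, Matrix.det_diagonal]

lemma hasDerivAt_s_rpow (s a : ℝ) (hs : s * s = 1) {t : ℝ} (ht : 0 < s * t) :
    HasDerivAt (fun t => s * (s * t) ^ a) (a * (s * t) ^ (a - 1)) t := by
  have h1 : HasDerivAt (fun t : ℝ => s * t) s t := by
    simpa using (hasDerivAt_id t).const_mul s
  have h2 := (Real.hasDerivAt_rpow_const (x := s * t) (p := a) (Or.inl ht.ne')).comp t h1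
  have h3 := h2.const_mul s
  refine h3.congr_deriv ?_
  linear_combination (a * (s * t) ^ (a - 1)) * hs

lemma hasDerivAt_s_pow (s : ℝ) (hs : s * s = 1) (n : ℕ) (t : ℝ) :
    HasDerivAt (fun t => s * (s * t) ^ n) (n * (s * t) ^ (n - 1)) t := by
  have h1 : HasDerivAt (fun t : ℝ => s * t) s t := by
    simpa using (hasDerivAt_id t).const_mul s
  have h2 := (h1.pow n).const_mul s
  refine h2.congr_deriv ?_
  linear_combination ((n : ℝ) * (s * t) ^ (n - 1)) * hs

lemma abs_eq_s {s x : ℝ} (hs : s * s = 1) (hx : 0 < s * x) : |x| = s * x := by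
  rcases mul_self_eq_one_iff.1 hs with h | h <;> subst h
  · rw [one_mul] at hx ⊢; exact abs_of_pos hx
  · have : x < 0 := by nlinarith
    simp [abs_of_neg this]

lemma isOpen_omegaBox (q : ℕ) (ε : Fin q → ℕ) (ρ : Fin q → ℝ) :
    IsOpen (OmegaBox q ε ρ) := by
  have : OmegaBox q ε ρ =
      Set.pi Set.univ (fun j => {t : ℝ | 0 < (-1 : ℝ) ^ ε j * t ∧ (-1 : ℝ) ^ ε j * t < ρ j}) := by
    ext x; simp [OmegaBox, Set.mem_pi]
  rw [this]
  refine isOpen_set_pi Set.finite_univ (fun j _ => ?_)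
  have : {t : ℝ | 0 < (-1 : ℝ) ^ ε j * t ∧ (-1 : ℝ) ^ ε j * t < ρ j}
      = (fun t : ℝ => (-1 : ℝ) ^ ε j * t) ⁻¹' Set.Ioo 0 (ρ j) := rfl
  rw [this]
  exact isOpen_Ioo.preimage (by continuity)

lemma hasFDerivAt_pi_comp {q : ℕ} (g : Fin q → ℝ → ℝ) (c : Fin q → ℝ) (x : Fin q → ℝ)
    (h : ∀ j, HasDerivAt (g j) (c j) (x j)) :
    HasFDerivAt (fun z (j : Fin q) => g j (z j))
      (ContinuousLinearMap.pi fun j => c j • ContinuousLinearMap.proj (R := ℝ)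
        (φ := fun _ : Fin q => ℝ) j) x := by
  refine hasFDerivAt_pi.2 fun j => ?_
  exact (h j).comp_hasFDerivAt x (hasFDerivAt_apply j x)

lemma rpow_inv_natpow {u : ℝ} (hu : 0 ≤ u) {n : ℕ} (hn : n ≠ 0) :
    (u ^ ((n : ℝ)⁻¹)) ^ n = u := by
  rw [← Real.rpow_natCast (u ^ ((n : ℝ)⁻¹)) n, ← Real.rpow_mul hu,
    inv_mul_cancel₀ (by exact_mod_cast hn), Real.rpow_one]

lemma natpow_rpow_inv {u : ℝ} (hu : 0 ≤ u) {n : ℕ} (hn : n ≠ 0) :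
    (u ^ n) ^ ((n : ℝ)⁻¹) = u := by
  rw [← Real.rpow_natCast u n, ← Real.rpow_mul hu,
    mul_inv_cancel₀ (by exact_mod_cast hn), Real.rpow_one]

/-- If `f` is `C¹` on `Ω_ε(ρ)` with `∂ᵢ f ∈ L¹(Ω_ε(ρ))`, then
`∂ᵢ (f ∘ ψ̄_{γ,ε}⁻¹) ∈ L¹(Ω_ε(ρ^γ))`, with
`∫ |∂ᵢ (f ∘ ψ̄_{γ,ε}⁻¹)| ≤ (∏_{j≠i} γ_j ρ_j^{γ_j−1}) ∫ |∂ᵢ f|`. -/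
theorem partial_deriv_L1_power_substitution
    (q : ℕ) (γ ε : Fin q → ℕ) (hγ : ∀ j, 0 < γ j) (hε : ∀ j, ε j ≤ 1)
    (ρ : Fin q → ℝ) (hρ : ∀ j, 0 < ρ j) (i : Fin q)
    (f : (Fin q → ℝ) → ℝ)
    (hf : ContDiffOn ℝ 1 f (OmegaBox q ε ρ))
    (hint : IntegrableOn (fun x => fderiv ℝ f x (Pi.single i 1)) (OmegaBox q ε ρ)) :
    IntegrableOn (fun x => fderiv ℝ (f ∘ psiInv q γ ε) x (Pi.single i 1))
      (OmegaBox q ε (fun j => ρ j ^ γ j)) ∧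
    (∫ x in OmegaBox q ε (fun j => ρ j ^ γ j),
        |fderiv ℝ (f ∘ psiInv q γ ε) x (Pi.single i 1)|)
      ≤ (∏ j ∈ Finset.univ.erase i, (γ j : ℝ) * ρ j ^ (γ j - 1)) *
        ∫ x in OmegaBox q ε ρ, |fderiv ℝ f x (Pi.single i 1)| := by
  classical
  set s : Fin q → ℝ := fun j => (-1 : ℝ) ^ ε j with hs_def
  have hss : ∀ j, s j * s j = 1 := by
    intro j
    show ((-1 : ℝ) ^ ε j) * ((-1 : ℝ) ^ ε j) = 1
    rw [← pow_add, ← two_mul, pow_mul]; norm_num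
  set B : Set (Fin q → ℝ) := OmegaBox q ε ρ with hB
  set B' : Set (Fin q → ℝ) := OmegaBox q ε (fun j => ρ j ^ γ j) with hB'
  have hBopen : IsOpen B := isOpen_omegaBox q ε ρ
  have hB'open : IsOpen B' := isOpen_omegaBox q ε _
  have hBmeas : MeasurableSet B := hBopen.measurableSet
  have hγR : ∀ j, (γ j : ℝ) ≠ 0 := fun j => Nat.cast_ne_zero.2 (hγ j).ne'
  -- the substitution and its derivative
  set ψ : (Fin q → ℝ) → (Fin q → ℝ) := fun y j => s j * (s j * y j) ^ γ j with hψdef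
  set D : (Fin q → ℝ) → Fin q → ℝ := fun y j => (γ j : ℝ) * (s j * y j) ^ (γ j - 1) with hDdef
  set L : (Fin q → ℝ) → ((Fin q → ℝ) →L[ℝ] (Fin q → ℝ)) :=
    fun y => ContinuousLinearMap.pi fun j => D y j • ContinuousLinearMap.proj (R := ℝ)
      (φ := fun _ : Fin q => ℝ) j with hLdef
  have hψderiv : ∀ y, HasFDerivAt ψ (L y) y := fun y =>
    hasFDerivAt_pi_comp (fun j t => s j * (s j * t) ^ γ j) (D y) y
      (fun j => hasDerivAt_s_pow (s j) (hss j) (γ j) (y j))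
  have hdet : ∀ y, (L y).det = ∏ j, D y j := fun y => det_pi_smul_proj (D y)
  have hsψ : ∀ y j, s j * ψ y j = (s j * y j) ^ γ j := by
    intro y j
    show s j * (s j * (s j * y j) ^ γ j) = _
    rw [← mul_assoc, hss j, one_mul]
  have hmapsto : ∀ y ∈ B, ψ y ∈ B' := by
    intro y hy
    intro j
    have h := hy j
    constructor
    · rw [hsψ]; exact pow_pos h.1 _
    · rw [hsψ]; exact pow_lt_pow_left₀ h.2 h.1.le (hγ j).ne'
  have hinj : Set.InjOn ψ B := by
    intro y hy y' hy' h
    funext j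
    have hj : ψ y j = ψ y' j := congrFun h j
    have h1 : (s j * y j) ^ γ j = (s j * y' j) ^ γ j := by
      rw [← hsψ, ← hsψ, hj]
    have h2 : s j * y j = s j * y' j :=
      (pow_left_strictMonoOn₀ (n := γ j) (hγ j).ne').injOn
        (Set.mem_setOf.2 (hy j).1.le) (Set.mem_setOf.2 (hy' j).1.le) h1
    have := congrArg (fun t => s j * t) h2
    simpa [← mul_assoc, hss j] using this
  have hpsiB : ∀ x ∈ B', psiInv q γ ε x ∈ B := by
    intro x hx j
    have h := hx j
    have habs : |x j| = s j * x j := abs_eq_s (hss j) h.1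
    have hspsi : s j * psiInv q γ ε x j = (s j * x j) ^ ((γ j : ℝ)⁻¹) := by
      show s j * (s j * |x j| ^ ((γ j : ℝ)⁻¹)) = _
      rw [← mul_assoc, hss j, one_mul, habs]
    constructor
    · rw [hspsi]; exact Real.rpow_pos_of_pos h.1 _
    · rw [hspsi]
      calc (s j * x j) ^ ((γ j : ℝ)⁻¹) < (ρ j ^ γ j) ^ ((γ j : ℝ)⁻¹) :=
            Real.rpow_lt_rpow h.1.le h.2 (inv_pos.2 (by exact_mod_cast hγ j))
        _ = ρ j := natpow_rpow_inv (hρ j).le (hγ j).ne'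
  have hψpsi : ∀ x ∈ B', ψ (psiInv q γ ε x) = x := by
    intro x hx
    funext j
    have h := hx j
    have habs : |x j| = s j * x j := abs_eq_s (hss j) h.1
    show s j * (s j * (s j * |x j| ^ ((γ j : ℝ)⁻¹))) ^ γ j = x j
    rw [← mul_assoc, hss j, one_mul, rpow_inv_natpow (abs_nonneg _) (hγ j).ne', habs,
      ← mul_assoc, hss j, one_mul]
  have himg : ψ '' B = B' := by
    apply Set.Subset.antisymm
    · rintro _ ⟨y, hy, rfl⟩; exact hmapsto y hy
    · intro x hx
      exact ⟨psiInv q γ ε x, hpsiB x hx, hψpsi x hx⟩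
  have hpsiψ : ∀ y ∈ B, psiInv q γ ε (ψ y) = y := by
    intro y hy
    funext j
    have h := hy j
    have habs : |ψ y j| = (s j * y j) ^ γ j := by
      rw [abs_eq_s (hss j) (by rw [hsψ]; exact pow_pos h.1 _), hsψ]
    show s j * |ψ y j| ^ ((γ j : ℝ)⁻¹) = y j
    rw [habs, natpow_rpow_inv h.1.le (hγ j).ne', ← mul_assoc, hss j, one_mul]
  -- chain rule on B'
  set F : (Fin q → ℝ) → ℝ := fun x => fderiv ℝ f x (Pi.single i 1) with hF
  set c : (Fin q → ℝ) → Fin q → ℝ :=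
    fun x j => (γ j : ℝ)⁻¹ * (s j * x j) ^ ((γ j : ℝ)⁻¹ - 1) with hc
  have key : ∀ x ∈ B', fderiv ℝ (f ∘ psiInv q γ ε) x (Pi.single i 1)
      = c x i * F (psiInv q γ ε x) := by
    intro x hx
    have hΦeq : ∀ z ∈ B', psiInv q γ ε z = fun j => s j * (s j * z j) ^ ((γ j : ℝ)⁻¹) := by
      intro z hz
      funext j
      show s j * |z j| ^ ((γ j : ℝ)⁻¹) = _
      rw [abs_eq_s (hss j) (hz j).1]
    have hΦd : HasFDerivAt (fun z (j : Fin q) => s j * (s j * z j) ^ ((γ j : ℝ)⁻¹))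
        (ContinuousLinearMap.pi fun j => c x j • ContinuousLinearMap.proj (R := ℝ)
          (φ := fun _ : Fin q => ℝ) j) x :=
      hasFDerivAt_pi_comp (fun j t => s j * (s j * t) ^ ((γ j : ℝ)⁻¹)) (c x) x
        (fun j => hasDerivAt_s_rpow (s j) ((γ j : ℝ)⁻¹) (hss j) (hx j).1)
    have hfd : DifferentiableAt ℝ f (psiInv q γ ε x) :=
      (hf.differentiableOn one_ne_zero).differentiableAt (hBopen.mem_nhds (hpsiB x hx))
    have hg : HasFDerivAt f (fderiv ℝ f (psiInv q γ ε x))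
        ((fun z (j : Fin q) => s j * (s j * z j) ^ ((γ j : ℝ)⁻¹)) x) := by
      rw [show ((fun z (j : Fin q) => s j * (s j * z j) ^ ((γ j : ℝ)⁻¹)) x)
        = psiInv q γ ε x from (hΦeq x hx).symm]
      exact hfd.hasFDerivAt
    have hcomp := hg.comp x hΦd
    have hev : f ∘ psiInv q γ ε =ᶠ[nhds x] f ∘ (fun z (j : Fin q) =>
        s j * (s j * z j) ^ ((γ j : ℝ)⁻¹)) := by
      filter_upwards [hB'open.mem_nhds hx] with z hz
      simp only [Function.comp]
      rw [hΦeq z hz]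
    have hfinal := hcomp.congr_of_eventuallyEq hev
    rw [hfinal.fderiv, ContinuousLinearMap.comp_apply]
    have hL : (ContinuousLinearMap.pi fun j => c x j • ContinuousLinearMap.proj (R := ℝ)
        (φ := fun _ : Fin q => ℝ) j) (Pi.single i 1) = c x i • (Pi.single i 1 : Fin q → ℝ) := by
      funext j
      simp only [ContinuousLinearMap.pi_apply, ContinuousLinearMap.smul_apply,
        ContinuousLinearMap.proj_apply, Pi.smul_apply, smul_eq_mul, Pi.single_apply]
      by_cases hji : j = i <;> simp [hji]
    rw [hL, ContinuousLinearMap.map_smul, smul_eq_mul]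
  -- positivity facts for c
  have hcpos : ∀ x ∈ B', 0 < c x i := by
    intro x hx
    have := (hx i).1
    have : (0 : ℝ) < (s i * x i) ^ ((γ i : ℝ)⁻¹ - 1) := Real.rpow_pos_of_pos this _
    have hγi : (0 : ℝ) < (γ i : ℝ)⁻¹ := inv_pos.2 (by exact_mod_cast hγ i)
    exact mul_pos hγi this
  have hDpos : ∀ y ∈ B, ∀ j, 0 < D y j := by
    intro y hy j
    exact mul_pos (by exact_mod_cast hγ j) (pow_pos (hy j).1 _)
  have habs_det : ∀ y ∈ B, |(L y).det| = ∏ j, D y j := by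
    intro y hy
    rw [hdet y]
    exact abs_of_pos (Finset.prod_pos fun j _ => hDpos y hy j)
  -- central algebraic identity
  have hDc : ∀ y ∈ B, (∏ j, D y j) * c (ψ y) i = ∏ j ∈ univ.erase i, D y j := by
    intro y hy
    have hu : 0 < s i * y i := (hy i).1
    have hci : c (ψ y) i = (γ i : ℝ)⁻¹ * (s i * y i) ^ ((1 : ℝ) - γ i) := by
      show (γ i : ℝ)⁻¹ * (s i * ψ y i) ^ ((γ i : ℝ)⁻¹ - 1) = _
      rw [hsψ, ← Real.rpow_natCast (s i * y i) (γ i), ← Real.rpow_mul hu.le]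
      rw [show (γ i : ℝ) * ((γ i : ℝ)⁻¹ - 1) = 1 - γ i from by
        linear_combination mul_inv_cancel₀ (hγR i)]
    have hone : D y i * ((γ i : ℝ)⁻¹ * (s i * y i) ^ ((1 : ℝ) - γ i)) = 1 := by
      show (γ i : ℝ) * (s i * y i) ^ (γ i - 1) * _ = 1
      rw [← Real.rpow_natCast (s i * y i) (γ i - 1)]
      rw [show ((γ i - 1 : ℕ) : ℝ) = (γ i : ℝ) - 1 by
        rw [Nat.cast_sub (hγ i)]; norm_num]
      have hAB : (s i * y i) ^ ((γ i : ℝ) - 1) * (s i * y i) ^ ((1 : ℝ) - γ i) = 1 := by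
        rw [← Real.rpow_add hu]; norm_num
      have hγγ : (γ i : ℝ) * (γ i : ℝ)⁻¹ = 1 := mul_inv_cancel₀ (hγR i)
      calc (γ i : ℝ) * (s i * y i) ^ ((γ i : ℝ) - 1) *
            ((γ i : ℝ)⁻¹ * (s i * y i) ^ ((1 : ℝ) - γ i))
          = ((γ i : ℝ) * (γ i : ℝ)⁻¹) *
            ((s i * y i) ^ ((γ i : ℝ) - 1) * (s i * y i) ^ ((1 : ℝ) - γ i)) := by ring
        _ = 1 := by rw [hγγ, hAB, mul_one]
    rw [← Finset.mul_prod_erase univ (D y) (mem_univ i), hci, mul_comm (D y i), mul_assoc, hone,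
      mul_one]
  -- the transported integrands
  have htrans : ∀ y ∈ B,
      |(L y).det| • (fderiv ℝ (f ∘ psiInv q γ ε) (ψ y) (Pi.single i 1))
        = (∏ j ∈ univ.erase i, D y j) * F y := by
    intro y hy
    rw [key (ψ y) (hmapsto y hy), hpsiψ y hy, habs_det y hy, smul_eq_mul, ← mul_assoc, hDc y hy]
  have htransabs : ∀ y ∈ B,
      |(L y).det| • |fderiv ℝ (f ∘ psiInv q γ ε) (ψ y) (Pi.single i 1)|
        = (∏ j ∈ univ.erase i, D y j) * |F y| := by
    intro y hy
    rw [key (ψ y) (hmapsto y hy), hpsiψ y hy, habs_det y hy, smul_eq_mul, abs_mul,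
      abs_of_pos (hcpos (ψ y) (hmapsto y hy)), ← mul_assoc, hDc y hy]
  -- bounds
  set C : ℝ := ∏ j ∈ univ.erase i, (γ j : ℝ) * ρ j ^ (γ j - 1) with hCdef
  have hCpos : 0 < C := Finset.prod_pos fun j _ =>
    mul_pos (by exact_mod_cast hγ j) (pow_pos (hρ j) _)
  have hw_nonneg : ∀ y ∈ B, 0 ≤ ∏ j ∈ univ.erase i, D y j := fun y hy =>
    Finset.prod_nonneg fun j _ => (hDpos y hy j).le
  have hw_bound : ∀ y ∈ B, (∏ j ∈ univ.erase i, D y j) ≤ C := by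
    intro y hy
    refine Finset.prod_le_prod (fun j _ => (hDpos y hy j).le) (fun j _ => ?_)
    refine mul_le_mul_of_nonneg_left ?_ (by positivity)
    exact pow_le_pow_left₀ (hy j).1.le (hy j).2.le _
  have hw_cont : Continuous fun y : Fin q → ℝ => ∏ j ∈ univ.erase i, D y j := by
    refine continuous_finset_prod _ (fun j _ => ?_)
    exact continuous_const.mul ((continuous_const.mul (continuous_apply j)).pow _)
  -- integrability of the pulled-back functions
  have hF_int : IntegrableOn F B := hint
  have hwF_int : IntegrableOn (fun y => (∏ j ∈ univ.erase i, D y j) * F y) B := by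
    have hm : AEStronglyMeasurable (fun y => (∏ j ∈ univ.erase i, D y j) * F y)
        (volume.restrict B) :=
      hw_cont.aestronglyMeasurable.mul hF_int.aestronglyMeasurable
    refine Integrable.mono (hF_int.const_mul C) hm ?_
    filter_upwards [ae_restrict_mem hBmeas] with y hy
    rw [Real.norm_eq_abs, Real.norm_eq_abs, abs_mul, abs_mul,
      abs_of_nonneg (hw_nonneg y hy)]
    exact mul_le_mul_of_nonneg_right ((hw_bound y hy).trans (le_abs_self C)) (abs_nonneg _)
  have hwFabs_int : IntegrableOn (fun y => (∏ j ∈ univ.erase i, D y j) * |F y|) B := by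
    have hm : AEStronglyMeasurable (fun y => (∏ j ∈ univ.erase i, D y j) * |F y|)
        (volume.restrict B) :=
      hw_cont.aestronglyMeasurable.mul hF_int.abs.aestronglyMeasurable
    refine Integrable.mono (hF_int.abs.const_mul C) hm ?_
    filter_upwards [ae_restrict_mem hBmeas] with y hy
    rw [Real.norm_eq_abs, Real.norm_eq_abs, abs_mul, abs_mul,
      abs_of_nonneg (hw_nonneg y hy), abs_abs]
    exact mul_le_mul_of_nonneg_right ((hw_bound y hy).trans (le_abs_self C)) (abs_nonneg _)
  have hψw : ∀ y ∈ B, HasFDerivWithinAt ψ (L y) B y := fun y _ => (hψderiv y).hasFDerivWithinAt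
  -- part 1 : integrability
  have hiff := integrableOn_image_iff_integrableOn_abs_det_fderiv_smul volume hBmeas hψw hinj
    (fun x => fderiv ℝ (f ∘ psiInv q γ ε) x (Pi.single i 1))
  rw [himg] at hiff
  have hInt1 : IntegrableOn (fun x => fderiv ℝ (f ∘ psiInv q γ ε) x (Pi.single i 1)) B' :=
    hiff.2 (hwF_int.congr_fun (fun y hy => (htrans y hy).symm) hBmeas)
  refine ⟨hInt1, ?_⟩
  -- part 2 : the integral bound
  have heq := integral_image_eq_integral_abs_det_fderiv_smul volume hBmeas hψw hinj
    (fun x => |fderiv ℝ (f ∘ psiInv q γ ε) x (Pi.single i 1)|)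
  rw [himg] at heq
  rw [heq]
  rw [setIntegral_congr_fun hBmeas htransabs]
  calc (∫ y in B, (∏ j ∈ univ.erase i, D y j) * |F y|)
      ≤ ∫ y in B, C * |F y| := by
        refine setIntegral_mono_on hwFabs_int (hF_int.abs.const_mul C) hBmeas ?_
        intro y hy
        exact mul_le_mul_of_nonneg_right (hw_bound y hy) (abs_nonneg _)
    _ = C * ∫ y in B, |F y| := by
        rw [MeasureTheory.integral_const_mul]
end

section
/- Let f : ℝ² ∖ S → ℂ, where S = (−∞,0]×{0}, be the principal branch of the complex square root, given in polar coordinates (r, φ) ∈ (0,∞)×(−π,π) by f(r,φ) = √r (cos(φ/2) + i sin(φ/2)). For 0 < ε < x₀ < π/2 let Q(x₀,ε) := {(r,φ) : |r − x₀| < ε, π − ε < |φ| < π}. Then the mean of Im f over Q(x₀,ε) is 0, and the mean oscillation mo(Im f, Q(x₀,ε)) = (2/5) sin(ε/2) · ((x₀+ε)^{5/2} − (x₀−ε)^{5/2})/(x₀ ε²) converges to √x₀ as ε → 0. Consequently f does not have vanishing mean oscillation on any neighborhood of the origin. -/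
open MeasureTheory Real Filter
open scoped NNReal ENNReal

/-- The square root function in polar coordinates: `√r (cos(φ/2) + i sin(φ/2))`. -/
noncomputable def sqrtPolar (r φ : ℝ) : ℂ :=
  (Real.sqrt r : ℂ) * ((Real.cos (φ / 2) : ℂ) + (Real.sin (φ / 2) : ℂ) * Complex.I)

/-- The polar box `Q(x₀,ε) = {(r,φ) : |r − x₀| < ε, π − ε < |φ| < π}`. -/
def Qpolar (x₀ ε : ℝ) : Set (ℝ × ℝ) :=
  {p | |p.1 - x₀| < ε ∧ π - ε < |p.2| ∧ |p.2| < π}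

/-- The plane measure in polar coordinates: `r dr dφ`. -/
noncomputable def polarMeasure : Measure (ℝ × ℝ) :=
  volume.withDensity fun p => ENNReal.ofReal p.1

/-- The principal branch of the complex square root, as a function on `ℝ²`. -/
noncomputable def sqrtCartesian (v : ℝ × ℝ) : ℂ :=
  ((v.1 : ℂ) + (v.2 : ℂ) * Complex.I) ^ ((1 : ℂ) / 2)

/-- An open square (cube in `ℝ²`) with center `c` and half side `t`. -/
def square (c : ℝ × ℝ) (t : ℝ) : Set (ℝ × ℝ) :=
  {v | |v.1 - c.1| < t ∧ |v.2 - c.2| < t}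

/-- The mean oscillation of `g` over `Q` (w.r.t. Lebesgue measure). -/
noncomputable def meanOsc (g : ℝ × ℝ → ℂ) (Q : Set (ℝ × ℝ)) : ℝ :=
  ⨍ v in Q, ‖g v - ⨍ w in Q, g w‖

lemma im_sqrtPolar (r φ : ℝ) : (sqrtPolar r φ).im = Real.sqrt r * Real.sin (φ / 2) := by
  simp only [sqrtPolar, Complex.mul_im, Complex.add_im, Complex.add_re, Complex.ofReal_re,
    Complex.ofReal_im, Complex.mul_re, Complex.I_re, Complex.I_im]
  ring

lemma ioo_int (f : ℝ → ℝ) {α β : ℝ} (h : α ≤ β) :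
    ∫ x in Set.Ioo α β, f x = ∫ x in α..β, f x := by
  rw [intervalIntegral.integral_of_le h, integral_Ioc_eq_integral_Ioo]

lemma int_sin_half {α β : ℝ} (h : α ≤ β) :
    ∫ x in Set.Ioo α β, Real.sin (x / 2) = 2 * (Real.cos (α/2) - Real.cos (β/2)) := by
  rw [ioo_int _ h, intervalIntegral.integral_comp_div (f := Real.sin) (c := 2) two_ne_zero,
    integral_sin]
  rw [smul_eq_mul]

lemma intOn_cont {f : ℝ → ℝ} (hf : Continuous f) (α β : ℝ) :
    IntegrableOn f (Set.Ioo α β) volume :=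
  (hf.integrableOn_Icc).mono_set Set.Ioo_subset_Icc_self

lemma part1 (x₀ : ℝ) (hx₀ : 0 < x₀) (hx₀' : x₀ < π / 2) (ε : ℝ) (hε : 0 < ε) (hεx : ε < x₀) :
    (∫ p in Qpolar x₀ ε, (sqrtPolar p.1 p.2).im ∂polarMeasure) = 0 ∧
    (∫ p in Qpolar x₀ ε, |(sqrtPolar p.1 p.2).im| ∂polarMeasure) /
        (polarMeasure (Qpolar x₀ ε)).toReal
      = (2 / 5) * Real.sin (ε / 2) *
          ((x₀ + ε) ^ ((5 : ℝ) / 2) - (x₀ - ε) ^ ((5 : ℝ) / 2)) / (x₀ * ε ^ 2) := by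
  have hπ : (2:ℝ) < π := by linarith [Real.pi_gt_three]
  have hπε : 0 < π - ε := by linarith
  have ha : 0 < x₀ - ε := by linarith
  set A : Set ℝ := Set.Ioo (x₀ - ε) (x₀ + ε) with hA
  set B : Set ℝ := Set.Ioo (-π) (-(π - ε)) ∪ Set.Ioo (π - ε) π with hB
  have habs : ∀ φ : ℝ, (π - ε < |φ| ∧ |φ| < π) ↔
      ((-π < φ ∧ φ < -(π - ε)) ∨ (π - ε < φ ∧ φ < π)) := by
    intro φ
    rcases abs_cases φ with ⟨h, h0⟩ | ⟨h, h0⟩ <;> rw [h] <;> constructor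
    · rintro ⟨h1, h2⟩; right; exact ⟨h1, h2⟩
    · rintro (⟨h1, h2⟩ | ⟨h1, h2⟩) <;> constructor <;> linarith
    · rintro ⟨h1, h2⟩; left; constructor <;> linarith
    · rintro (⟨h1, h2⟩ | ⟨h1, h2⟩) <;> constructor <;> linarith
  have hQeq : Qpolar x₀ ε = A ×ˢ B := by
    ext ⟨r, φ⟩
    simp only [Qpolar, Set.mem_setOf_eq, Set.mem_prod, hA, hB, Set.mem_union, Set.mem_Ioo,
      abs_sub_lt_iff]
    rw [habs φ]
    constructor
    · rintro ⟨⟨h1, h2⟩, h3⟩; exact ⟨⟨by linarith, by linarith⟩, h3⟩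
    · rintro ⟨⟨h1, h2⟩, h3⟩; exact ⟨⟨by linarith, by linarith⟩, h3⟩
  have hBmeas : MeasurableSet B := (measurableSet_Ioo.union measurableSet_Ioo)
  have hABmeas : MeasurableSet (A ×ˢ B) := measurableSet_Ioo.prod hBmeas
  -- the density reduction
  have hdens : ∀ h : ℝ × ℝ → ℝ, (∫ p in Qpolar x₀ ε, h p ∂polarMeasure)
      = ∫ p in A ×ˢ B, (Real.toNNReal p.1 : ℝ≥0) • h p := by
    intro h
    rw [hQeq, polarMeasure]
    exact setIntegral_withDensity_eq_setIntegral_smul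
      (measurable_fst.real_toNNReal) h hABmeas
  -- 1D integrals on A
  have hA32 : ∫ r in A, (r * Real.sqrt r) =
      (2/5) * ((x₀ + ε) ^ ((5:ℝ)/2) - (x₀ - ε) ^ ((5:ℝ)/2)) := by
    have hcg : ∀ r ∈ A, r * Real.sqrt r = r ^ ((3:ℝ)/2) := by
      intro r hr
      have hrpos : 0 < r := lt_trans ha hr.1
      rw [Real.sqrt_eq_rpow, show ((3:ℝ)/2) = 1 + 1/2 by norm_num,
        Real.rpow_add hrpos, Real.rpow_one]
    rw [setIntegral_congr_fun measurableSet_Ioo hcg, ioo_int _ (by linarith),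
      integral_rpow (Or.inl (by norm_num))]
    rw [show (3:ℝ)/2 + 1 = (5:ℝ)/2 by norm_num]
    ring
  have hA1 : ∫ r in A, r = 2 * x₀ * ε := by
    rw [ioo_int _ (by linarith), integral_id]
    ring
  -- 1D integrals on B
  have hdisj : Disjoint (Set.Ioo (-π) (-(π - ε))) (Set.Ioo (π - ε) π) := by
    rw [Set.disjoint_left]
    rintro x ⟨-, h2⟩ ⟨h3, -⟩
    linarith
  have hsin0 : ∫ φ in B, Real.sin (φ / 2) = 0 := by
    rw [hB, setIntegral_union hdisj measurableSet_Ioo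
      (intOn_cont (f := fun φ => Real.sin (φ/2)) (by fun_prop) _ _)
      (intOn_cont (f := fun φ => Real.sin (φ/2)) (by fun_prop) _ _)]
    rw [int_sin_half (by linarith), int_sin_half (by linarith)]
    rw [show (-π)/2 = -(π/2) by ring, show (-(π - ε))/2 = -((π - ε)/2) by ring,
      Real.cos_neg, Real.cos_neg, Real.cos_pi_div_two]
    ring
  have hsinabs : ∫ φ in B, |Real.sin (φ / 2)| = 4 * Real.sin (ε / 2) := by
    have hc1 : ∀ φ ∈ Set.Ioo (π - ε) π, |Real.sin (φ / 2)| = Real.sin (φ / 2) := by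
      intro φ hφ
      exact abs_of_nonneg (Real.sin_nonneg_of_nonneg_of_le_pi (by linarith [hφ.1]) (by linarith [hφ.2, Real.pi_pos]))
    have hc2 : ∀ φ ∈ Set.Ioo (-π) (-(π - ε)), |Real.sin (φ / 2)| = -Real.sin (φ / 2) := by
      intro φ hφ
      exact abs_of_nonpos (Real.sin_nonpos_of_nonpos_of_neg_pi_le (by linarith [hφ.2]) (by linarith [hφ.1]))
    rw [hB, setIntegral_union hdisj measurableSet_Ioo
      ((intOn_cont (f := fun φ => Real.sin (φ/2)) (by fun_prop) _ _).abs)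
      ((intOn_cont (f := fun φ => Real.sin (φ/2)) (by fun_prop) _ _).abs)]
    rw [setIntegral_congr_fun measurableSet_Ioo hc2, setIntegral_congr_fun measurableSet_Ioo hc1]
    rw [integral_neg, int_sin_half (by linarith), int_sin_half (by linarith)]
    rw [show (-π)/2 = -(π/2) by ring, show (-(π - ε))/2 = -((π - ε)/2) by ring,
      Real.cos_neg, Real.cos_neg, Real.cos_pi_div_two,
      show (π - ε)/2 = π/2 - ε/2 by ring, Real.cos_pi_div_two_sub]
    ring
  have hone : ∫ _ in B, (1:ℝ) = 2 * ε := by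
    rw [hB, setIntegral_union hdisj measurableSet_Ioo
      (intOn_cont continuous_const _ _) (intOn_cont continuous_const _ _)]
    rw [setIntegral_const, setIntegral_const]
    rw [measureReal_def, measureReal_def, Real.volume_Ioo, Real.volume_Ioo, smul_eq_mul, smul_eq_mul]
    rw [ENNReal.toReal_ofReal (by linarith), ENNReal.toReal_ofReal (by linarith)]
    ring
  -- the numerator integrals
  have hint0 : (∫ p in Qpolar x₀ ε, (sqrtPolar p.1 p.2).im ∂polarMeasure) = 0 := by
    rw [hdens]
    have hcg : ∀ p ∈ A ×ˢ B, (Real.toNNReal p.1 : ℝ≥0) • (sqrtPolar p.1 p.2).im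
        = (p.1 * Real.sqrt p.1) * Real.sin (p.2 / 2) := by
      rintro ⟨r, φ⟩ ⟨hr, hφ⟩
      have hrpos : (0:ℝ) < r := lt_trans ha hr.1
      rw [NNReal.smul_def, smul_eq_mul, Real.coe_toNNReal _ hrpos.le, im_sqrtPolar]
      ring
    rw [setIntegral_congr_fun hABmeas hcg, Measure.volume_eq_prod,
      setIntegral_prod_mul (fun r => r * Real.sqrt r) (fun φ => Real.sin (φ / 2)) A B,
      hsin0, mul_zero]
  have hintabs : (∫ p in Qpolar x₀ ε, |(sqrtPolar p.1 p.2).im| ∂polarMeasure)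
      = ((2/5) * ((x₀ + ε) ^ ((5:ℝ)/2) - (x₀ - ε) ^ ((5:ℝ)/2))) * (4 * Real.sin (ε / 2)) := by
    rw [hdens]
    have hcg : ∀ p ∈ A ×ˢ B, (Real.toNNReal p.1 : ℝ≥0) • |(sqrtPolar p.1 p.2).im|
        = (p.1 * Real.sqrt p.1) * |Real.sin (p.2 / 2)| := by
      rintro ⟨r, φ⟩ ⟨hr, hφ⟩
      have hrpos : (0:ℝ) < r := lt_trans ha hr.1
      rw [NNReal.smul_def, smul_eq_mul, Real.coe_toNNReal _ hrpos.le, im_sqrtPolar,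
        abs_mul, abs_of_nonneg (Real.sqrt_nonneg r)]
      ring
    rw [setIntegral_congr_fun hABmeas hcg, Measure.volume_eq_prod,
      setIntegral_prod_mul (fun r => r * Real.sqrt r) (fun φ => |Real.sin (φ / 2)|) A B,
      hA32, hsinabs]
  -- the measure of Q
  have hBvol : volume B = ENNReal.ofReal ε + ENNReal.ofReal ε := by
    rw [hB, measure_union hdisj measurableSet_Ioo, Real.volume_Ioo, Real.volume_Ioo]
    congr 1 <;> congr 1 <;> ring
  have hABfin : volume (A ×ˢ B) ≠ ⊤ := by
    rw [Measure.volume_eq_prod, Measure.prod_prod, Real.volume_Ioo, hBvol]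
    exact ENNReal.mul_ne_top ENNReal.ofReal_ne_top
      (ENNReal.add_ne_top.mpr ⟨ENNReal.ofReal_ne_top, ENNReal.ofReal_ne_top⟩)
  have hvol : (polarMeasure (Qpolar x₀ ε)).toReal = 4 * x₀ * ε^2 := by
    rw [hQeq, polarMeasure, withDensity_apply _ hABmeas]
    have hint : Integrable (fun p : ℝ × ℝ => p.1) (volume.restrict (A ×ˢ B)) :=
      Measure.integrableOn_of_bounded (M := x₀ + ε) hABfin
        measurable_fst.aestronglyMeasurable
        ((ae_restrict_iff' hABmeas).mpr (ae_of_all _ (fun p hp => by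
          rw [Real.norm_eq_abs, abs_of_pos (lt_trans ha hp.1.1)]; exact hp.1.2.le)))
    have hnn : 0 ≤ᵐ[volume.restrict (A ×ˢ B)] fun p : ℝ × ℝ => p.1 :=
      (ae_restrict_iff' hABmeas).mpr (ae_of_all _ (fun p hp => (lt_trans ha hp.1.1).le))
    rw [← ofReal_integral_eq_lintegral_ofReal hint hnn]
    have hI : (∫ p in A ×ˢ B, p.1) = 4 * x₀ * ε^2 := by
      have hcg : ∀ p ∈ A ×ˢ B, (p : ℝ × ℝ).1 = (fun r : ℝ => r) p.1 * (fun _ : ℝ => (1:ℝ)) p.2 := by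
        intro p hp; simp
      rw [setIntegral_congr_fun hABmeas hcg, Measure.volume_eq_prod,
        setIntegral_prod_mul (fun r : ℝ => r) (fun _ : ℝ => (1:ℝ)) A B, hA1, hone]
      ring
    rw [hI, ENNReal.toReal_ofReal (by positivity)]
  refine ⟨hint0, ?_⟩
  rw [hintabs, hvol]
  have hx0 : x₀ ≠ 0 := hx₀.ne'
  have hε0 : ε ≠ 0 := hε.ne'
  field_simp

lemma part2 (x₀ : ℝ) (hx₀ : 0 < x₀) :
    Tendsto (fun ε : ℝ => (2 / 5) * Real.sin (ε / 2) *
        ((x₀ + ε) ^ ((5 : ℝ) / 2) - (x₀ - ε) ^ ((5 : ℝ) / 2)) / (x₀ * ε ^ 2))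
      (nhdsWithin 0 (Set.Ioi 0)) (nhds (Real.sqrt x₀)) := by
  have hs : HasDerivAt (fun ε : ℝ => Real.sin (ε / 2)) (1 / 2) 0 := by
    have h0 : HasDerivAt (fun ε : ℝ => ε / 2) (1/2) 0 := by
      simpa using (hasDerivAt_id (0:ℝ)).div_const 2
    simpa using h0.sin
  have hG : HasDerivAt (fun ε : ℝ =>
      (x₀ + ε) ^ ((5 : ℝ) / 2) - (x₀ - ε) ^ ((5 : ℝ) / 2)) (5 * x₀ ^ ((3:ℝ)/2)) 0 := by
    have ha : HasDerivAt (fun ε : ℝ => x₀ + ε) 1 0 := by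
      simpa using ((hasDerivAt_id (0:ℝ)).const_add x₀)
    have hb : HasDerivAt (fun ε : ℝ => x₀ - ε) (-1) 0 := by
      simpa using ((hasDerivAt_id (0:ℝ)).const_sub x₀)
    have h1 := ha.rpow_const (p := (5:ℝ)/2) (by left; simpa using hx₀.ne')
    have h2 := hb.rpow_const (p := (5:ℝ)/2) (by left; simpa using hx₀.ne')
    have := h1.sub h2
    simp only [add_zero, sub_zero] at this
    refine this.congr_deriv ?_
    rw [show (5:ℝ)/2 - 1 = (3:ℝ)/2 by norm_num]
    ring
  have hs' := hasDerivAt_iff_tendsto_slope.mp hs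
  have hG' := hasDerivAt_iff_tendsto_slope.mp hG
  have hmono : nhdsWithin (0:ℝ) (Set.Ioi 0) ≤ nhdsWithin 0 {(0:ℝ)}ᶜ :=
    nhdsWithin_mono 0 (fun x hx => ne_of_gt hx)
  have hs2 : Tendsto (fun ε : ℝ => Real.sin (ε/2) / ε) (nhdsWithin 0 (Set.Ioi 0)) (nhds (1/2)) := by
    have := hs'.mono_left hmono
    refine this.congr' ?_
    filter_upwards [self_mem_nhdsWithin] with ε (hε : ε ∈ Set.Ioi 0)
    simp [slope_def_field, div_eq_inv_mul]
  have hG2 : Tendsto (fun ε : ℝ => ((x₀ + ε) ^ ((5 : ℝ) / 2) - (x₀ - ε) ^ ((5 : ℝ) / 2)) / ε)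
      (nhdsWithin 0 (Set.Ioi 0)) (nhds (5 * x₀ ^ ((3:ℝ)/2))) := by
    have := hG'.mono_left hmono
    refine this.congr' ?_
    filter_upwards [self_mem_nhdsWithin] with ε hε
    simp [slope_def_field, div_eq_inv_mul]
  have key := ((hs2.mul hG2).const_mul (2/(5*x₀)))
  have hval : 2/(5*x₀) * (1/2 * (5 * x₀ ^ ((3:ℝ)/2))) = Real.sqrt x₀ := by
    have h3 : Real.sqrt x₀ = x₀ ^ ((3:ℝ)/2) / x₀ := by
      rw [Real.sqrt_eq_rpow, show ((1:ℝ)/2) = (3:ℝ)/2 - 1 by norm_num,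
        Real.rpow_sub hx₀, Real.rpow_one]
    rw [h3]; field_simp
  rw [← hval]
  refine key.congr' ?_
  filter_upwards [self_mem_nhdsWithin] with ε (hε : ε ∈ Set.Ioi 0)
  have : ε ≠ 0 := ne_of_gt hε
  field_simp

/-- `(z^{1/2})² = z` for `z ≠ 0`. -/
lemma sq_cpow_half {z : ℂ} (hz : z ≠ 0) : (z ^ ((1:ℂ)/2)) ^ 2 = z := by
  rw [Complex.cpow_def_of_ne_zero hz, ← Complex.exp_nat_mul]
  rw [show ((2:ℕ):ℂ) * (Complex.log z * (1/2)) = Complex.log z by push_cast; ring]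
  exact Complex.exp_log hz

/-- lower bound for the imaginary part of the square root -/
lemma im_sq_cpow_half {z : ℂ} (hz : z ≠ 0) : -z.re ≤ (z ^ ((1:ℂ)/2)).im ^ 2 := by
  have h := sq_cpow_half hz
  have : z.re = (z ^ ((1:ℂ)/2)).re ^ 2 - (z ^ ((1:ℂ)/2)).im ^ 2 := by
    conv_lhs => rw [← h]
    simp [pow_two, Complex.mul_re]
  nlinarith [sq_nonneg (z ^ ((1:ℂ)/2)).re]

/-- oddness of the imaginary part under conjugation, away from the cut -/
lemma im_conj_cpow_half {z : ℂ} (hz : z.arg ≠ π) :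
    (((starRingEnd ℂ) z) ^ ((1:ℂ)/2)).im = - (z ^ ((1:ℂ)/2)).im := by
  have h := Complex.conj_cpow z ((1:ℂ)/2) hz
  have h2 : (starRingEnd ℂ) ((1:ℂ)/2) = (1:ℂ)/2 := by
    simp [Complex.ext_iff]
  rw [h2] at h
  rw [h, Complex.conj_im]

lemma sqrtCartesian_measurable : Measurable sqrtCartesian := by
  apply Measurable.pow
  · exact (Complex.measurable_ofReal.comp measurable_fst).add
      ((Complex.measurable_ofReal.comp measurable_snd).mul measurable_const)
  · exact measurable_const

lemma square_eq_prod (c : ℝ × ℝ) (t : ℝ) :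
    square c t = Set.Ioo (c.1 - t) (c.1 + t) ×ˢ Set.Ioo (c.2 - t) (c.2 + t) := by
  ext v
  simp [square, Set.mem_prod, abs_sub_lt_iff]
  constructor <;> rintro ⟨⟨h1, h2⟩, h3, h4⟩ <;> exact ⟨⟨by linarith, by linarith⟩, by linarith, by linarith⟩

lemma measurableSet_square (c : ℝ × ℝ) (t : ℝ) : MeasurableSet (square c t) := by
  rw [square_eq_prod]; exact (measurableSet_Ioo.prod measurableSet_Ioo)

lemma volume_square (c : ℝ × ℝ) (t : ℝ) (ht : 0 < t) :
    volume (square c t) = ENNReal.ofReal (2*t) * ENNReal.ofReal (2*t) := by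
  rw [square_eq_prod, Measure.volume_eq_prod, Measure.prod_prod]
  rw [Real.volume_Ioo, Real.volume_Ioo]
  congr 1 <;> ring_nf

lemma part3 (U : Set (ℝ × ℝ)) (hU : IsOpen U) (h0 : ((0, 0) : ℝ × ℝ) ∈ U) :
    ¬ (∀ η : ℝ, 0 < η → ∃ s : ℝ, 0 < s ∧
        ∀ (c : ℝ × ℝ) (t : ℝ), 0 < t → t ≤ s → closure (square c t) ⊆ U →
          meanOsc sqrtCartesian (square c t) ≤ η) := by
  obtain ⟨δ, hδ, hball⟩ := Metric.isOpen_iff.mp hU _ h0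
  push_neg
  refine ⟨Real.sqrt (δ/4) / 2, by positivity, ?_⟩
  intro s hs
  set c : ℝ × ℝ := (-(δ/2), 0) with hc
  set t := min s (δ/8) with htdef
  have ht : 0 < t := lt_min hs (by linarith)
  have ht8 : t ≤ δ/8 := min_le_right _ _
  refine ⟨c, t, ht, min_le_left _ _, ?_, ?_⟩
  · -- closure ⊆ U
    have hcl : closure (square c t) ⊆
        Set.Icc (c.1 - t) (c.1 + t) ×ˢ Set.Icc (c.2 - t) (c.2 + t) := by
      rw [square_eq_prod]
      refine closure_minimal ?_ (isClosed_Icc.prod isClosed_Icc)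
      exact Set.prod_mono Set.Ioo_subset_Icc_self Set.Ioo_subset_Icc_self
    refine fun v hv => hball ?_
    obtain ⟨⟨h1, h2⟩, h3, h4⟩ := hcl hv
    simp only [hc] at h1 h2 h3 h4
    rw [Metric.mem_ball, Prod.dist_eq]
    rw [show ((0,0) : ℝ × ℝ) = ((0 : ℝ), (0 : ℝ)) from rfl]
    simp only [Real.dist_eq, sub_zero]
    apply max_lt <;> rw [abs_lt] <;> constructor <;> linarith
  · -- meanOsc > η
    set Q := square c t with hQdef
    set g := sqrtCartesian with hg
    set b : ℝ := Real.sqrt (δ/4) with hb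
    have hbpos : 0 < b := Real.sqrt_pos.mpr (by linarith)
    -- basic facts about points of Q
    have hre : ∀ v ∈ Q, v.1 < -(δ/4) := by
      rintro ⟨v1, v2⟩ hv
      obtain ⟨h1, -⟩ := hv
      simp only [hc] at h1
      rw [abs_lt] at h1
      simp only at h1 ⊢
      linarith [h1.2, ht8]
    have hzne : ∀ v ∈ Q, ((v.1 : ℂ) + (v.2 : ℂ) * Complex.I) ≠ 0 := by
      intro v hv h
      have := hre v hv
      have : ((v.1 : ℂ) + (v.2 : ℂ) * Complex.I).re = 0 := by rw [h]; simp
      simp [Complex.add_re, Complex.mul_re] at this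
      linarith [hre v hv]
    -- pointwise lower bound  b ≤ |Im g v|  on Q
    have hlow : ∀ v ∈ Q, b ≤ |(g v).im| := by
      intro v hv
      have hz := hzne v hv
      have h1 := im_sq_cpow_half hz
      have hre' : ((v.1 : ℂ) + (v.2 : ℂ) * Complex.I).re = v.1 := by
        simp [Complex.add_re, Complex.mul_re]
      rw [hre'] at h1
      have h2 : δ/4 ≤ (g v).im ^ 2 := le_trans (by linarith [hre v hv]) h1
      calc b = Real.sqrt (δ/4) := hb
        _ ≤ Real.sqrt ((g v).im ^ 2) := Real.sqrt_le_sqrt h2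
        _ = |(g v).im| := Real.sqrt_sq_eq_abs _
    -- measure of Q
    have hQmeas : MeasurableSet Q := measurableSet_square c t
    have hQvol : volume Q = ENNReal.ofReal (2*t) * ENNReal.ofReal (2*t) := volume_square c t ht
    have hQfin : volume Q ≠ ⊤ := by rw [hQvol]; exact ENNReal.mul_ne_top ENNReal.ofReal_ne_top ENNReal.ofReal_ne_top
    have hQpos : volume Q ≠ 0 := by
      rw [hQvol]
      simp only [ne_eq, mul_eq_zero, ENNReal.ofReal_eq_zero, not_or, not_le]
      constructor <;> linarith
    -- integrability
    have hbound : ∀ v ∈ Q, ‖g v‖ ≤ Real.sqrt δ := by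
      intro v hv
      have hz := hzne v hv
      rw [hg]
      have : ‖sqrtCartesian v‖ = ‖((v.1 : ℂ) + (v.2 : ℂ) * Complex.I)‖ ^ ((1:ℝ)/2) := by
        rw [sqrtCartesian]
        rw [Complex.norm_cpow_of_ne_zero hz]
        norm_num
      rw [this, ← Real.sqrt_eq_rpow]
      apply Real.sqrt_le_sqrt
      -- |z| ≤ δ
      obtain ⟨h1, h2⟩ := hv
      simp only [hc] at h1 h2
      rw [abs_lt] at h1 h2
      calc ‖((v.1 : ℂ) + (v.2 : ℂ) * Complex.I)‖
          ≤ |((v.1 : ℂ) + (v.2 : ℂ) * Complex.I).re| + |((v.1 : ℂ) + (v.2 : ℂ) * Complex.I).im| :=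
            Complex.norm_le_abs_re_add_abs_im _
        _ = |v.1| + |v.2| := by simp
        _ ≤ δ := by
            have hv1 : |v.1| ≤ 5*δ/8 := by
              rw [abs_le]; constructor <;> linarith [h1.1, h1.2, ht8]
            have hv2 : |v.2| ≤ δ/8 := by
              rw [abs_le]; constructor <;> linarith [h2.1, h2.2, ht8]
            linarith
    haveI : Fact (volume Q < ⊤) := ⟨hQfin.lt_top⟩
    have hgint : IntegrableOn g Q volume :=
      Measure.integrableOn_of_bounded hQfin sqrtCartesian_measurable.aestronglyMeasurable
        ((ae_restrict_iff' hQmeas).mpr (ae_of_all _ hbound))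
    set m : ℂ := ⨍ w in Q, g w with hm
    set c0 : ℝ := m.im with hc0
    have hIm : Integrable (fun v => (g v).im) (volume.restrict Q) := hgint.im
    have hImc : Integrable (fun v => |(g v).im - c0|) (volume.restrict Q) :=
      (hIm.sub (integrable_const c0)).abs
    have hImp : Integrable (fun v => |(g v).im + c0|) (volume.restrict Q) :=
      (hIm.add (integrable_const c0)).abs
    have hAbsIm : Integrable (fun v => |(g v).im|) (volume.restrict Q) := hIm.abs
    -- the reflection
    set T : ℝ × ℝ → ℝ × ℝ := fun p => (p.1, -p.2) with hT
    have hTmp : MeasurePreserving T volume volume := by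
      rw [Measure.volume_eq_prod]
      exact (MeasurePreserving.id volume).prod (Measure.measurePreserving_neg volume)
    have hTemb : MeasurableEmbedding T :=
      ((MeasurableEquiv.refl ℝ).prodCongr (Homeomorph.neg ℝ).toMeasurableEquiv).measurableEmbedding
    have hTQ : T ⁻¹' Q = Q := by
      ext v
      simp only [hQdef, hT, square, Set.mem_preimage, Set.mem_setOf_eq, hc]
      rw [sub_zero, sub_zero, abs_neg]
    have hnull : volume {v : ℝ × ℝ | v.2 = 0} = 0 := by
      have he : {v : ℝ × ℝ | v.2 = 0} = (Set.univ : Set ℝ) ×ˢ ({0} : Set ℝ) := by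
        ext ⟨a, b⟩; simp [eq_comm]
      rw [he, Measure.volume_eq_prod, Measure.prod_prod]; simp
    have hodd : ∀ᵐ v ∂(volume.restrict Q), (g (T v)).im = -(g v).im := by
      have h1 : ∀ᵐ (v : ℝ × ℝ) ∂volume, v.2 ≠ 0 := by
        rw [ae_iff]
        convert hnull using 2
        simp
      filter_upwards [ae_restrict_of_ae h1, ae_restrict_mem hQmeas] with v hv2 hvQ
      have hze : ((v.1 : ℂ) + ((-v.2 : ℝ) : ℂ) * Complex.I) =
          (starRingEnd ℂ) ((v.1 : ℂ) + (v.2 : ℂ) * Complex.I) := by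
        simp [Complex.ext_iff]
      have harg : ((v.1 : ℂ) + (v.2 : ℂ) * Complex.I).arg ≠ π := by
        intro h
        have := Complex.arg_eq_pi_iff.mp h
        apply hv2
        simpa using this.2
      show (sqrtCartesian (v.1, -v.2)).im = -(sqrtCartesian v).im
      rw [sqrtCartesian, sqrtCartesian]
      show (((v.1 : ℂ) + ((-v.2 : ℝ) : ℂ) * Complex.I) ^ ((1:ℂ)/2)).im = _
      rw [hze, im_conj_cpow_half harg]
    have hrefl : ∫ v in Q, |(g v).im + c0| = ∫ v in Q, |(g v).im - c0| := by
      have h := hTmp.setIntegral_preimage_emb hTemb (fun v => |(g v).im - c0|) Q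
      rw [hTQ] at h
      rw [← h]
      refine integral_congr_ae ?_
      filter_upwards [hodd] with v hv
      rw [hv, show -(g v).im - c0 = -((g v).im + c0) by ring, abs_neg]
    set V : ℝ := (volume Q).toReal with hV
    have hVpos : 0 < V := ENNReal.toReal_pos hQpos hQfin
    have hkey : b * V ≤ ∫ v in Q, ‖g v - m‖ := by
      have s1 : b * V = ∫ _ in Q, b := by
        rw [setIntegral_const, smul_eq_mul, mul_comm]; rfl
      have s2 : (∫ _ in Q, b) ≤ ∫ v in Q, |(g v).im| :=
        setIntegral_mono_on (integrableOn_const hQfin) hAbsIm hQmeas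
          (fun v hv => hlow v hv)
      have s3 : (∫ v in Q, |(g v).im|) ≤ ∫ v in Q, |(g v).im - c0| := by
        have h2 : (∫ v in Q, (|(g v).im| + |(g v).im|)) ≤
            ∫ v in Q, (|(g v).im - c0| + |(g v).im + c0|) := by
          refine integral_mono (hAbsIm.add hAbsIm) (hImc.add hImp) (fun v => ?_)
          have he : |(g v).im| + |(g v).im| = |((g v).im - c0) + ((g v).im + c0)| := by
            rw [show ((g v).im - c0) + ((g v).im + c0) = 2 * (g v).im by ring, abs_mul]
            rw [show |(2:ℝ)| = 2 by norm_num]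
            ring
          rw [he]
          exact abs_add_le _ _
        rw [integral_add hImc hImp, hrefl, integral_add hAbsIm hAbsIm] at h2
        linarith
      have s4 : (∫ v in Q, |(g v).im - c0|) ≤ ∫ v in Q, ‖g v - m‖ := by
        refine integral_mono hImc ((hgint.sub (integrable_const m)).norm) (fun v => ?_)
        have := Complex.abs_im_le_norm (g v - m)
        simpa [Complex.sub_im] using this
      linarith
    have : b ≤ meanOsc sqrtCartesian Q := by
      rw [meanOsc]
      rw [setAverage_eq]
      rw [smul_eq_mul]
      rw [show volume.real Q = V from rfl, ← hg, ← hm]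
      rw [← mul_le_mul_iff_right₀ hVpos, ← mul_assoc, mul_inv_cancel₀ hVpos.ne', one_mul]
      calc V * b = b * V := mul_comm _ _
        _ ≤ _ := hkey
    calc Real.sqrt (δ/4) / 2 < b := by rw [hb]; linarith [hbpos]
      _ ≤ _ := this

/-- The principal square root is not `VMO` near the origin: for `0 < ε < x₀ < π/2`,
the mean of `Im √` over the polar box `Q(x₀,ε)` (w.r.t. the area element `r dr dφ`)
is `0`, its mean oscillation there equals
`(2/5) sin(ε/2) ((x₀+ε)^{5/2} − (x₀−ε)^{5/2})/(x₀ ε²)`, which tends to `√x₀` as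
`ε → 0⁺`; consequently `√` does not have vanishing mean oscillation on any
neighborhood of the origin. -/
theorem sqrt_not_VMO (x₀ : ℝ) (hx₀ : 0 < x₀) (hx₀' : x₀ < π / 2) :
    (∀ ε : ℝ, 0 < ε → ε < x₀ →
      (∫ p in Qpolar x₀ ε, (sqrtPolar p.1 p.2).im ∂polarMeasure) = 0 ∧
      (∫ p in Qpolar x₀ ε, |(sqrtPolar p.1 p.2).im| ∂polarMeasure) /
          (polarMeasure (Qpolar x₀ ε)).toReal
        = (2 / 5) * Real.sin (ε / 2) *
            ((x₀ + ε) ^ ((5 : ℝ) / 2) - (x₀ - ε) ^ ((5 : ℝ) / 2)) / (x₀ * ε ^ 2)) ∧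
    Tendsto (fun ε : ℝ => (2 / 5) * Real.sin (ε / 2) *
        ((x₀ + ε) ^ ((5 : ℝ) / 2) - (x₀ - ε) ^ ((5 : ℝ) / 2)) / (x₀ * ε ^ 2))
      (nhdsWithin 0 (Set.Ioi 0)) (nhds (Real.sqrt x₀)) ∧
    (∀ U : Set (ℝ × ℝ), IsOpen U → ((0, 0) : ℝ × ℝ) ∈ U →
      ¬ (∀ η : ℝ, 0 < η → ∃ s : ℝ, 0 < s ∧
          ∀ (c : ℝ × ℝ) (t : ℝ), 0 < t → t ≤ s → closure (square c t) ⊆ U →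
            meanOsc sqrtCartesian (square c t) ≤ η)) :=
  ⟨fun ε hε hεx => part1 x₀ hx₀ hx₀' ε hε hεx, part2 x₀ hx₀, fun U hU h0 => part3 U hU h0⟩
end
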